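/- arXiv:2410.01760 — 2 statements merged into one kernel-verified Lean document; each statement's English description precedes it below -/
import Mathlib

section
/- Let B be the AlternatingOracle strategy. Then for every realization of its internal random choices, OBJ_B ≤ 3·OPT + 3η, where η = Σ_{t=1}^T |ν(t) − ω(t)| is the total prediction loss. -/
namespace Caching

attribute [local instance low] Classical.propDecidable

/-- A run of a feasible eviction strategy on the request sequence `σ` with cache size `k`
and time horizon `T`.  `C t` is the cache after processing request `t` (with `C 0 = ∅`),
and `p t` is the page evicted at time `t` (meaningful at full-cache misses). -/
structure CacheRun (S : Type) [DecidableEq S] (k T : ℕ) (σ : ℕ → S) where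
  C : ℕ → Finset S
  p : ℕ → S
  init : C 0 = ∅
  card_le : ∀ t, (C t).card ≤ k
  hit : ∀ t, 1 ≤ t → t ≤ T → (σ t ∈ C (t - 1) ∨ (C (t - 1)).card < k) →
      C t = insert (σ t) (C (t - 1))
  evict_mem : ∀ t, 1 ≤ t → t ≤ T → σ t ∉ C (t - 1) → (C (t - 1)).card = k →
      p t ∈ C (t - 1)
  evict : ∀ t, 1 ≤ t → t ≤ T → σ t ∉ C (t - 1) → (C (t - 1)).card = k →
      C t = insert (σ t) ((C (t - 1)).erase (p t))

variable {S : Type} [DecidableEq S]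

/- `nextReq σ T t` is `ν(t)`: the first time `s > t` (with `s ≤ T`) at which the page
`σ t` is requested again, and `T + 1` if there is no such time. -/
open Classical in
noncomputable def nextReq (σ : ℕ → S) (T t : ℕ) : ℕ :=
  if h : ∃ s, t < s ∧ s ≤ T ∧ σ s = σ t then Nat.find h else T + 1

/-- The total prediction loss `η = Σ_{t=1}^T |ν(t) - ω(t)|`. -/
noncomputable def totalLoss (σ : ℕ → S) (T : ℕ) (ω : ℕ → ℕ) : ℕ :=
  ∑ t ∈ Finset.Icc 1 T, Nat.dist (nextReq σ T t) (ω t)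

/-- `I_Q(t)`: indices of the last requests (up to time `t`) of the currently cached pages. -/
noncomputable def lastIdx {k T : ℕ} {σ : ℕ → S} (R : CacheRun S k T σ) (t : ℕ) : Finset ℕ :=
  (Finset.Icc 1 t).filter fun i => σ i ∈ R.C t ∧ ∀ j ∈ Finset.Icc (i + 1) t, σ j ≠ σ i

/-- Time `t` is a full-cache miss (an eviction step). -/
def EvictStep {k T : ℕ} {σ : ℕ → S} (R : CacheRun S k T σ) (t : ℕ) : Prop :=
  1 ≤ t ∧ t ≤ T ∧ σ t ∉ R.C (t - 1) ∧ (R.C (t - 1)).card = k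

/-- At time `t` the run evicts the page whose last-request index is `i`. -/
def EvictsIdx {k T : ℕ} {σ : ℕ → S} (R : CacheRun S k T σ) (t i : ℕ) : Prop :=
  EvictStep R t ∧ i ∈ lastIdx R (t - 1) ∧ R.p t = σ i

/-- `OBJ_Q`: the number of cache misses of the run. -/
noncomputable def misses {k T : ℕ} {σ : ℕ → S} (R : CacheRun S k T σ) : ℕ :=
  ((Finset.Icc 1 T).filter fun t => σ t ∉ R.C (t - 1)).card

/-- Belady's algorithm: on a full-cache miss always evict the cached page with the
largest next-request time. -/
def IsBelady {k T : ℕ} {σ : ℕ → S} (A : CacheRun S k T σ) : Prop :=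
  ∀ t, EvictStep A t → ∀ i ∈ lastIdx A (t - 1), A.p t = σ i →
    ∀ j ∈ lastIdx A (t - 1), nextReq σ T j ≤ nextReq σ T i

/-- BlindOracle: on a full-cache miss always evict the cached page with the largest
predicted next-request time. -/
def IsBlindOracle {k T : ℕ} {σ : ℕ → S} (B : CacheRun S k T σ) (ω : ℕ → ℕ) : Prop :=
  ∀ t, EvictStep B t → ∀ i ∈ lastIdx B (t - 1), B.p t = σ i →
    ∀ j ∈ lastIdx B (t - 1), ω j ≤ ω i

/-- An eviction graph of a run: a directed graph on `{1,…,T}` whose every edge `(i, j)`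
corresponds to a distinct time (`time e`) at which the run made a mistake by evicting
page `σ j` while `i` was a strictly better eviction candidate in the cache. -/
structure EvictionGraph {k T : ℕ} {σ : ℕ → S} (R : CacheRun S k T σ) where
  E : Finset (ℕ × ℕ)
  time : ℕ × ℕ → ℕ
  time_inj : ∀ e ∈ E, ∀ e' ∈ E, time e = time e' → e = e'
  mistake : ∀ e ∈ E, EvictsIdx R (time e) e.2 ∧ e.1 ∈ lastIdx R (time e - 1) ∧
      nextReq σ T e.2 < nextReq σ T e.1

/-- The eviction at time `t` triggers the eviction at time `t'`: the page evicted
at `t` is next requested at `t' = ν(i)`, which is again an eviction step. -/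
def Triggers {k T : ℕ} {σ : ℕ → S} (R : CacheRun S k T σ) (t t' : ℕ) : Prop :=
  ∃ i, EvictsIdx R t i ∧ t' = nextReq σ T i ∧ ∃ j, EvictsIdx R t' j

/-- The eviction of the page with last-request index `i` triggers the eviction of the
page with last-request index `j` (at time `ν(i)`). -/
def TriggersIdx {k T : ℕ} {σ : ℕ → S} (R : CacheRun S k T σ) (i j : ℕ) : Prop :=
  (∃ t, EvictsIdx R t i) ∧ EvictsIdx R (nextReq σ T i) j

/-- The page requested at time `t` was never requested before. -/
def NewPage (σ : ℕ → S) (t : ℕ) : Prop := ∀ s, 1 ≤ s → s < t → σ s ≠ σ t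

/-- At time `t` the evicted page has the largest prediction among cached pages. -/
def BlindChoiceAt {k T : ℕ} {σ : ℕ → S} (R : CacheRun S k T σ) (ω : ℕ → ℕ) (t : ℕ) : Prop :=
  ∀ i ∈ lastIdx R (t - 1), R.p t = σ i → ∀ j ∈ lastIdx R (t - 1), ω j ≤ ω i

/-- Corrector's choice at time `t`: if some cached page has a provably wrong prediction
(`ω i < t`), evict such a page with minimal prediction; otherwise act as BlindOracle. -/
def CorrectorChoiceAt {k T : ℕ} {σ : ℕ → S} (R : CacheRun S k T σ) (ω : ℕ → ℕ) (t : ℕ) :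
    Prop :=
  ((∃ i ∈ lastIdx R (t - 1), ω i < t) →
    ∀ i ∈ lastIdx R (t - 1), R.p t = σ i →
      ω i < t ∧ ∀ j ∈ lastIdx R (t - 1), ω j < t → ω i ≤ ω j) ∧
  ((¬ ∃ i ∈ lastIdx R (t - 1), ω i < t) → BlindChoiceAt R ω t)

/-- The page requested at time `t` was last evicted (before `t`) at a step labeled with
strategy `s₀` (0 = BlindOracle, 1 = RandomAlg, 2 = Corrector). -/
def LastEvictedWith {k T : ℕ} {σ : ℕ → S} (R : CacheRun S k T σ) (strat : ℕ → Fin 3)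
    (t : ℕ) (s₀ : Fin 3) : Prop :=
  ∃ t₀, t₀ < t ∧ EvictStep R t₀ ∧ R.p t₀ = σ t ∧ strat t₀ = s₀ ∧
    ∀ t₁, t₀ < t₁ → t₁ < t → ¬(EvictStep R t₁ ∧ R.p t₁ = σ t)

/-- A run of the AlternatingOracle strategy (for a fixed realization of its random
choices), together with the labeling `strat` of which of the three strategies was used
at each eviction step: on a miss for a never-requested page use BlindOracle; if the
requested page was last evicted by BlindOracle use RandomAlg (an arbitrary cached page);
if by RandomAlg use Corrector; if by Corrector use BlindOracle. -/
def IsAlternatingOracle {k T : ℕ} {σ : ℕ → S} (R : CacheRun S k T σ) (ω : ℕ → ℕ)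
    (strat : ℕ → Fin 3) : Prop :=
  ∀ t, EvictStep R t →
    (NewPage σ t → strat t = 0 ∧ BlindChoiceAt R ω t) ∧
    (LastEvictedWith R strat t 0 → strat t = 1) ∧
    (LastEvictedWith R strat t 1 → strat t = 2 ∧ CorrectorChoiceAt R ω t) ∧
    (LastEvictedWith R strat t 2 → strat t = 0 ∧ BlindChoiceAt R ω t)

/-- AlternatingOracle driven by a seed `u` of uniform random values: at each eviction
step performed by RandomAlg at time `t`, the evicted page is the one whose last-request
index has rank `u t` among the `k` cached indices, so that for a uniformly random seed
the evicted page is uniform over the cache. -/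
def IsAlternatingOracleSeeded {k T : ℕ} {σ : ℕ → S} (R : CacheRun S k T σ) (ω : ℕ → ℕ)
    (strat : ℕ → Fin 3) (u : Fin (T + 1) → Fin k) : Prop :=
  IsAlternatingOracle R ω strat ∧
  ∀ t (h : EvictStep R t), strat t = 1 →
    ∀ i ∈ lastIdx R (t - 1), R.p t = σ i →
      ((lastIdx R (t - 1)).filter fun j => j < i).card =
        ((u ⟨t, Nat.lt_succ_of_le h.2.1⟩ : Fin k) : ℕ)

/-- The family of runs is adapted to the seeds: the behavior up to time `t` depends only
on the seed values with index at most `t` (the strategy is online). -/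
def Adapted {k T : ℕ} {σ : ℕ → S} (R : (Fin (T + 1) → Fin k) → CacheRun S k T σ)
    (strat : (Fin (T + 1) → Fin k) → ℕ → Fin 3) : Prop :=
  ∀ u u' t, (∀ s : Fin (T + 1), (s : ℕ) ≤ t → u s = u' s) →
    (R u).C t = (R u').C t ∧ (R u).p t = (R u').p t ∧ strat u t = strat u' t

/-- The probability of the outcome `x` for `T` i.i.d. Bernoulli(γ) random bits. -/
noncomputable def bernWeight (γ : ℝ) {T : ℕ} (x : Fin T → Bool) : ℝ :=
  ∏ i, if x i then γ else 1 - γ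

/-- `S(x, m)`: the number of ones among the first `m` coordinates of `x`. -/
noncomputable def scount {T : ℕ} (x : Fin T → Bool) (m : ℕ) : ℕ :=
  (Finset.univ.filter fun i : Fin T => (i : ℕ) < m ∧ x i).card

section Dev
variable {k T : ℕ} {σ : ℕ → S}

/-! ### nextp : page-based next-request time -/

noncomputable def nextp (σ : ℕ → S) (T t : ℕ) (s : S) : ℕ :=
  if h : ∃ r, t < r ∧ r ≤ T ∧ σ r = s then Nat.find h else T + 1

lemma nextReq_eq_nextp_self (i : ℕ) : nextReq σ T i = nextp σ T i (σ i) := rfl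

lemma nextp_le_succ (t : ℕ) (s : S) : nextp σ T t s ≤ T + 1 := by
  by_cases hex : ∃ r, t < r ∧ r ≤ T ∧ σ r = s
  · rw [nextp, dif_pos hex]
    exact le_trans (Nat.find_spec hex).2.1 (Nat.le_succ T)
  · rw [nextp, dif_neg hex]

lemma nextp_gt (t : ℕ) (s : S) (ht : t ≤ T) : t < nextp σ T t s := by
  by_cases hex : ∃ r, t < r ∧ r ≤ T ∧ σ r = s
  · rw [nextp, dif_pos hex]
    exact (Nat.find_spec hex).1
  · rw [nextp, dif_neg hex]; omega

lemma nextp_le {t r : ℕ} {s : S} (h1 : t < r) (h2 : r ≤ T) (h3 : σ r = s) :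
    nextp σ T t s ≤ r := by
  unfold nextp
  rw [dif_pos ⟨r, h1, h2, h3⟩]
  exact Nat.find_min' _ ⟨h1, h2, h3⟩

lemma nextp_spec {t : ℕ} {s : S} (h : nextp σ T t s ≤ T) :
    t < nextp σ T t s ∧ σ (nextp σ T t s) = s ∧
      ∀ r, t < r → r < nextp σ T t s → σ r ≠ s := by
  by_cases hex : ∃ r, t < r ∧ r ≤ T ∧ σ r = s
  · rw [nextp, dif_pos hex] at h ⊢
    refine ⟨(Nat.find_spec hex).1, (Nat.find_spec hex).2.2, ?_⟩
    intro r hr1 hr2 hr3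
    exact Nat.find_min hex hr2 ⟨hr1, le_trans (le_of_lt hr2) h, hr3⟩
  · rw [nextp, dif_neg hex] at h; omega

lemma nextp_inj {t : ℕ} {s s' : S} (h : nextp σ T t s ≤ T) (h' : nextp σ T t s' ≤ T)
    (e : nextp σ T t s = nextp σ T t s') : s = s' := by
  have h1 := (nextp_spec h).2.1
  have h2 := (nextp_spec h').2.1
  rw [← h1, ← h2, e]

lemma nextp_mono {a b : ℕ} (s : S) (hab : a ≤ b) : nextp σ T a s ≤ nextp σ T b s := by
  rcases le_or_gt (nextp σ T b s) T with hb | hb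
  · obtain ⟨h1, h2, _⟩ := nextp_spec hb
    exact nextp_le (lt_of_le_of_lt hab h1) hb h2
  · have := nextp_le_succ (σ := σ) (T := T) a s
    have := nextp_le_succ (σ := σ) (T := T) b s
    omega

lemma nextp_congr {a b : ℕ} {s : S} (hab : a ≤ b)
    (h : ∀ j, a < j → j ≤ b → σ j ≠ s) : nextp σ T a s = nextp σ T b s := by
  refine le_antisymm (nextp_mono s hab) ?_
  rcases le_or_gt (nextp σ T a s) T with ha | ha
  · obtain ⟨h1, h2, _⟩ := nextp_spec ha
    have hb : b < nextp σ T a s := by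
      by_contra hc
      exact h _ h1 (by omega) h2
    exact nextp_le hb ha h2
  · have := nextp_le_succ (σ := σ) (T := T) b s
    omega

lemma nextp_self {t : ℕ} (h1 : 1 ≤ t) (h2 : t ≤ T) : nextp σ T (t - 1) (σ t) = t := by
  have hle : nextp σ T (t - 1) (σ t) ≤ t := nextp_le (by omega) h2 rfl
  have hgt : t - 1 < nextp σ T (t - 1) (σ t) := nextp_gt _ _ (by omega)
  omega

lemma nextp_shift {t : ℕ} {s : S} (hs : s ≠ σ t) :
    nextp σ T (t - 1) s = nextp σ T t s := by
  refine nextp_congr (by omega) ?_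
  intro j hj1 hj2 hj3
  have : j = t := by omega
  subst this
  exact hs hj3.symm

/-! ### basic cache dynamics -/

variable (R : CacheRun S k T σ)

lemma step_cases {t : ℕ} (h1 : 1 ≤ t) (h2 : t ≤ T) :
    R.C t = insert (σ t) (R.C (t - 1)) ∨
      (EvictStep R t ∧ R.p t ∈ R.C (t - 1) ∧ R.p t ≠ σ t ∧
        R.C t = insert (σ t) ((R.C (t - 1)).erase (R.p t))) := by
  by_cases hm : σ t ∈ R.C (t - 1) ∨ (R.C (t - 1)).card < k
  · exact Or.inl (R.hit t h1 h2 hm)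
  · push_neg at hm
    obtain ⟨hnot, hge⟩ := hm
    have hcard : (R.C (t - 1)).card = k := le_antisymm (R.card_le _) hge
    have hpm := R.evict_mem t h1 h2 hnot hcard
    refine Or.inr ⟨⟨h1, h2, hnot, hcard⟩, hpm, ?_, R.evict t h1 h2 hnot hcard⟩
    intro he
    exact hnot (he ▸ hpm)

lemma sigma_mem_C {t : ℕ} (h1 : 1 ≤ t) (h2 : t ≤ T) : σ t ∈ R.C t := by
  rcases step_cases R h1 h2 with h | ⟨_, _, _, h⟩ <;> rw [h] <;> exact Finset.mem_insert_self _ _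

lemma mem_prev {t : ℕ} {x : S} (h1 : 1 ≤ t) (h2 : t ≤ T) (hx : x ∈ R.C t)
    (hne : x ≠ σ t) : x ∈ R.C (t - 1) := by
  rcases step_cases R h1 h2 with h | ⟨_, _, _, h⟩ <;> rw [h] at hx
  · exact (Finset.mem_insert.mp hx).resolve_left hne
  · exact Finset.mem_of_mem_erase ((Finset.mem_insert.mp hx).resolve_left hne)

lemma exists_req_of_reenter {a b : ℕ} {x : S} (hab : a ≤ b) (hb : b ≤ T)
    (h1 : x ∉ R.C a) (h2 : x ∈ R.C b) : ∃ s, a < s ∧ s ≤ b ∧ σ s = x := by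
  induction b with
  | zero =>
    have : a = 0 := by omega
    subst this; exact absurd h2 h1
  | succ n ih =>
    rcases Nat.lt_or_ge a (n + 1) with hlt | hge
    · by_cases hxn : x ∈ R.C n
      · obtain ⟨s, hs1, hs2, hs3⟩ := ih (by omega) (by omega) hxn
        exact ⟨s, hs1, by omega, hs3⟩
      · by_cases hxe : x = σ (n + 1)
        · exact ⟨n + 1, hlt, le_rfl, hxe.symm⟩
        · have := mem_prev R (t := n + 1) (by omega) hb h2 hxe
          simp only [Nat.add_sub_cancel] at this
          exact absurd this hxn
    · have : a = n + 1 := by omega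
      subst this
      exact absurd h2 h1

lemma exists_evict_of_leave {a b : ℕ} {x : S} (hab : a ≤ b) (hb : b ≤ T)
    (h1 : x ∈ R.C a) (h2 : x ∉ R.C b) :
    ∃ e, a < e ∧ e ≤ b ∧ EvictStep R e ∧ R.p e = x := by
  induction b with
  | zero =>
    have : a = 0 := by omega
    subst this; exact absurd h1 h2
  | succ n ih =>
    rcases Nat.lt_or_ge a (n + 1) with hlt | hge
    · by_cases hxn : x ∈ R.C n
      · rcases step_cases R (t := n + 1) (by omega) hb with h | ⟨hev, hpm, hpne, h⟩
        · rw [h] at h2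
          simp only [Nat.add_sub_cancel] at h2
          exact absurd (Finset.mem_insert_of_mem hxn) h2
        · simp only [Nat.add_sub_cancel] at h h2 hev hpm hpne ⊢
          rw [h] at h2
          have hxne : x ≠ σ (n + 1) := fun he => h2 (he ▸ Finset.mem_insert_self _ _)
          have : x ∉ (R.C n).erase (R.p (n + 1)) := fun hc => h2 (Finset.mem_insert_of_mem hc)
          have : x = R.p (n + 1) := by
            by_contra hc
            exact this (Finset.mem_erase.mpr ⟨hc, hxn⟩)
          exact ⟨n + 1, hlt, le_rfl, hev, this.symm⟩
      · obtain ⟨e, he1, he2, he3, he4⟩ := ih (by omega) (by omega) hxn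
        exact ⟨e, he1, by omega, he3, he4⟩
    · have : a = n + 1 := by omega
      subst this; exact absurd h1 h2

/-! ### lastIdx lemmas -/

lemma mem_lastIdx_iff {t i : ℕ} :
    i ∈ lastIdx R t ↔ (1 ≤ i ∧ i ≤ t ∧ σ i ∈ R.C t ∧ ∀ j, i + 1 ≤ j → j ≤ t → σ j ≠ σ i) := by
  simp only [lastIdx, Finset.mem_filter, Finset.mem_Icc, and_assoc, and_imp]

lemma exists_lastIdx {t : ℕ} {x : S} (ht : t ≤ T) (hx : x ∈ R.C t) :
    ∃ i ∈ lastIdx R t, σ i = x := by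
  induction t with
  | zero => rw [R.init] at hx; exact absurd hx (Finset.notMem_empty x)
  | succ n ih =>
    by_cases hxe : x = σ (n + 1)
    · refine ⟨n + 1, mem_lastIdx_iff R |>.mpr ⟨by omega, le_rfl, ?_, ?_⟩, hxe.symm⟩
      · exact hxe ▸ hx
      · intro j hj1 hj2; omega
    · have hxn : x ∈ R.C n := by
        have := mem_prev R (t := n + 1) (by omega) ht hx hxe
        simpa using this
      obtain ⟨i, hi, hsi⟩ := ih (by omega) hxn
      rw [mem_lastIdx_iff] at hi
      refine ⟨i, mem_lastIdx_iff R |>.mpr ⟨hi.1, by omega, hsi ▸ hx, ?_⟩, hsi⟩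
      intro j hj1 hj2
      rcases Nat.lt_or_ge j (n + 1) with h | h
      · exact hi.2.2.2 j hj1 (by omega)
      · have : j = n + 1 := by omega
        subst this
        rw [hsi]
        exact fun hc => hxe hc.symm

lemma lastIdx_page_inj {t i i' : ℕ} (hi : i ∈ lastIdx R t) (hi' : i' ∈ lastIdx R t)
    (h : σ i = σ i') : i = i' := by
  rw [mem_lastIdx_iff] at hi hi'
  by_contra hne
  rcases Nat.lt_or_ge i i' with hlt | hge
  · exact hi.2.2.2 i' (by omega) hi'.2.1 h.symm
  · exact hi'.2.2.2 i (by omega) hi.2.1 h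

lemma nu_eq_nextp {t i : ℕ} (hi : i ∈ lastIdx R t) :
    nextReq σ T i = nextp σ T t (σ i) := by
  rw [mem_lastIdx_iff] at hi
  rw [nextReq_eq_nextp_self]
  exact nextp_congr hi.2.1 (fun j hj1 hj2 => hi.2.2.2 j (by omega) hj2)

lemma nextp_mem_gt {t : ℕ} {x : S} (ht : t ≤ T) : t < nextp σ T t x := nextp_gt t x ht

/-! ### cards -/

lemma card_stays {t : ℕ} (h1 : 1 ≤ t) (h2 : t ≤ T) (hk : (R.C (t - 1)).card = k) :
    (R.C t).card = k := by
  rcases step_cases R h1 h2 with h | ⟨hev, hpm, hpne, h⟩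
  · refine le_antisymm (R.card_le t) ?_
    rw [h]
    exact le_trans (le_of_eq hk.symm) (Finset.card_le_card (Finset.subset_insert _ _))
  · rw [h]
    rw [Finset.card_insert_of_notMem (fun hc => hev.2.2.1 (Finset.mem_of_mem_erase hc)),
      Finset.card_erase_of_mem hpm, hk]
    have hkpos : 1 ≤ k := by
      by_contra hc
      have : k = 0 := by omega
      subst this
      rw [Finset.card_eq_zero] at hk
      rw [hk] at hpm
      exact Finset.notMem_empty _ hpm
    omega

lemma eq_or_full (B A : CacheRun S k T σ) {t : ℕ} (ht : t ≤ T) :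
    B.C t = A.C t ∨ ((B.C t).card = k ∧ (A.C t).card = k) := by
  induction t with
  | zero => rw [B.init, A.init]; exact Or.inl rfl
  | succ n ih =>
    rcases ih (by omega) with heq | ⟨hB, hA⟩
    · by_cases hfull : (B.C n).card = k
      · refine Or.inr ⟨?_, ?_⟩
        · have := card_stays B (t := n + 1) (by omega) ht (by simpa using hfull)
          exact this
        · have := card_stays A (t := n + 1) (by omega) ht (by simp only [Nat.add_sub_cancel]; rw [← heq]; exact hfull)
          exact this
      · have hlt : (B.C n).card < k := lt_of_le_of_ne (B.card_le n) hfull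
        left
        have e1 := B.hit (n + 1) (by omega) ht (Or.inr (by simpa using hlt))
        have e2 := A.hit (n + 1) (by omega) ht (Or.inr (by simp only [Nat.add_sub_cancel]; rw [← heq]; exact hlt))
        simp only [Nat.add_sub_cancel] at e1 e2
        rw [e1, e2, heq]
    · exact Or.inr ⟨card_stays B (by omega) ht (by simpa using hB),
        card_stays A (by omega) ht (by simpa using hA)⟩

/-! ### counting helpers -/

lemma cnt_erase (U : Finset S) (q : S) (hq : q ∈ U) (P : S → Prop) [DecidablePred P] :
    (((U.erase q).filter P).card : ℤ) = ((U.filter P).card : ℤ) - (if P q then 1 else 0) := by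
  classical
  rw [Finset.filter_erase]
  by_cases hP : P q
  · rw [Finset.card_erase_of_mem (Finset.mem_filter.mpr ⟨hq, hP⟩), if_pos hP]
    have h1 : 1 ≤ (U.filter P).card := Finset.card_pos.mpr ⟨q, Finset.mem_filter.mpr ⟨hq, hP⟩⟩
    push_cast [Nat.cast_sub h1]
    ring
  · rw [Finset.erase_eq_of_notMem (fun hc => hP (Finset.mem_filter.mp hc).2), if_neg hP]
    ring

lemma cnt_insert (U : Finset S) (w : S) (hw : w ∉ U) (P : S → Prop) [DecidablePred P] :
    (((insert w U).filter P).card : ℤ) = ((U.filter P).card : ℤ) + (if P w then 1 else 0) := by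
  classical
  rw [Finset.filter_insert]
  by_cases hP : P w
  · rw [if_pos hP, if_pos hP,
      Finset.card_insert_of_notMem (fun hc => hw (Finset.mem_filter.mp hc).1)]
    push_cast; ring
  · rw [if_neg hP, if_neg hP]; ring

lemma count_step (P : ℕ → Prop) [DecidablePred P] {t : ℕ} (h1 : 1 ≤ t) :
    (((Finset.Icc 1 t).filter P).card : ℤ) =
      (((Finset.Icc 1 (t - 1)).filter P).card : ℤ) + (if P t then 1 else 0) := by
  classical
  have hins : Finset.Icc 1 t = insert t (Finset.Icc 1 (t - 1)) := by
    ext x; simp only [Finset.mem_Icc, Finset.mem_insert]; omega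
  rw [hins, Finset.filter_insert]
  by_cases hP : P t
  · rw [if_pos hP, if_pos hP, Finset.card_insert_of_notMem
      (fun hc => by have := (Finset.mem_Icc.mp (Finset.filter_subset _ _ hc)).2; omega)]
    push_cast; ring
  · rw [if_neg hP, if_neg hP]; ring

/-! ### the potential function -/

variable (B A : CacheRun S k T σ)

noncomputable def gfun (t r : ℕ) : ℤ :=
  (((A.C t).filter (fun s => nextp σ T t s ≤ r)).card : ℤ) -
  (((B.C t).filter (fun s => nextp σ T t s ≤ r)).card : ℤ)

lemma range_nonempty' : (Finset.range (T + 1)).Nonempty :=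
  Finset.nonempty_range_iff.mpr (Nat.succ_ne_zero T)

noncomputable def Phi (t : ℕ) : ℤ :=
  max 0 ((Finset.range (T + 1)).sup' range_nonempty' (gfun B A t))

lemma phi_nonneg (t : ℕ) : 0 ≤ Phi B A t := le_max_left _ _

lemma gfun_le_phi {t r : ℕ} (hr : r ≤ T) : gfun B A t r ≤ Phi B A t :=
  le_trans (Finset.le_sup' _ (Finset.mem_range.mpr (by omega))) (le_max_right _ _)

lemma phi_le_of_forall {t : ℕ} {c : ℤ} (hc : 0 ≤ c)
    (h : ∀ r, r ≤ T → gfun B A t r ≤ c) : Phi B A t ≤ c := by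
  refine max_le hc (Finset.sup'_le _ _ (fun r hr => h r (by
    have := Finset.mem_range.mp hr; omega)))

lemma phi_zero : Phi B A 0 = 0 := by
  have h : ∀ r ∈ Finset.range (T + 1), gfun B A 0 r = 0 := by
    intro r _
    unfold gfun
    rw [B.init, A.init]
    simp
  unfold Phi
  rw [Finset.sup'_congr _ rfl h]
  simp

/-- The evicted page at time `t` (or `σ t` itself on a hit). -/
noncomputable def evKey (R : CacheRun S k T σ) (t : ℕ) : S :=
  if σ t ∈ R.C (t - 1) then σ t else R.p t

lemma side_step (R : CacheRun S k T σ) {t : ℕ} (h1 : 1 ≤ t) (h2 : t ≤ T)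
    (hfull : σ t ∈ R.C (t - 1) ∨ (R.C (t - 1)).card = k) (r : ℕ) :
    (((R.C t).filter (fun s => nextp σ T t s ≤ r)).card : ℤ) =
      (((R.C (t - 1)).filter (fun s => nextp σ T (t - 1) s ≤ r)).card : ℤ)
        - (if nextp σ T (t - 1) (evKey R t) ≤ r then 1 else 0)
        + (if nextp σ T t (σ t) ≤ r then 1 else 0) := by
  classical
  by_cases hm : σ t ∈ R.C (t - 1)
  · rw [evKey, if_pos hm]
    have hC : R.C t = R.C (t - 1) := by
      rw [R.hit t h1 h2 (Or.inl hm), Finset.insert_eq_self.mpr hm]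
    have e1 : R.C t = insert (σ t) ((R.C (t - 1)).erase (σ t)) := by
      rw [hC, Finset.insert_erase hm]
    rw [e1, cnt_insert _ _ (Finset.notMem_erase _ _) _]
    have e2 : ((R.C (t - 1)).erase (σ t)).filter (fun s => nextp σ T t s ≤ r) =
        ((R.C (t - 1)).erase (σ t)).filter (fun s => nextp σ T (t - 1) s ≤ r) := by
      refine Finset.filter_congr ?_
      intro x hx
      rw [nextp_shift (Finset.ne_of_mem_erase hx)]
    rw [e2, cnt_erase _ _ hm _]
  · rw [evKey, if_neg hm]
    have hcard : (R.C (t - 1)).card = k := hfull.resolve_left hm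
    have hC := R.evict t h1 h2 hm hcard
    have hpm := R.evict_mem t h1 h2 hm hcard
    rw [hC, cnt_insert _ _ (fun hc => hm (Finset.mem_of_mem_erase hc)) _]
    have e2 : ((R.C (t - 1)).erase (R.p t)).filter (fun s => nextp σ T t s ≤ r) =
        ((R.C (t - 1)).erase (R.p t)).filter (fun s => nextp σ T (t - 1) s ≤ r) := by
      refine Finset.filter_congr ?_
      intro x hx
      rw [nextp_shift (fun he => hm (by rw [← he]; exact Finset.mem_of_mem_erase hx))]
    rw [e2, cnt_erase _ _ hpm _]

lemma gfun_step {t : ℕ} (h1 : 1 ≤ t) (h2 : t ≤ T)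
    (hfB : σ t ∈ B.C (t - 1) ∨ (B.C (t - 1)).card = k)
    (hfA : σ t ∈ A.C (t - 1) ∨ (A.C (t - 1)).card = k) (r : ℕ) :
    gfun B A t r = gfun B A (t - 1) r
      - (if nextp σ T (t - 1) (evKey A t) ≤ r then 1 else 0)
      + (if nextp σ T (t - 1) (evKey B t) ≤ r then 1 else 0) := by
  unfold gfun
  rw [side_step B h1 h2 hfB r, side_step A h1 h2 hfA r]
  ring

/-! ### mistakes and the invariant -/

def MistakeAt (t : ℕ) : Prop :=
  EvictStep B t ∧ ∃ x ∈ B.C (t - 1), nextp σ T (t - 1) (B.p t) < nextp σ T (t - 1) x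

noncomputable def cmiss (R : CacheRun S k T σ) (t : ℕ) : ℕ :=
  ((Finset.Icc 1 t).filter fun s => σ s ∉ R.C (s - 1)).card

noncomputable def cmist (t : ℕ) : ℕ :=
  ((Finset.Icc 1 t).filter fun s => MistakeAt B s).card

lemma cache_nextp_gt {R : CacheRun S k T σ} {t : ℕ} (h1 : 1 ≤ t) (h2 : t ≤ T)
    (hm : σ t ∉ R.C (t - 1)) :
    ∀ x ∈ R.C (t - 1), t < nextp σ T (t - 1) x := by
  intro x hx
  have hgt : t - 1 < nextp σ T (t - 1) x := nextp_gt _ _ (by omega)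
  by_cases he : nextp σ T (t - 1) x = t
  · have hle : nextp σ T (t - 1) x ≤ T := by omega
    have hs := (nextp_spec hle).2.1
    rw [he] at hs
    exact absurd (hs ▸ hx) hm
  · omega

lemma trans_step (hA : IsBelady A) {t : ℕ} (h1 : 1 ≤ t) (h2 : t ≤ T) :
    (if σ t ∉ B.C (t - 1) then (1 : ℤ) else 0) + Phi B A t ≤
      Phi B A (t - 1) + (if σ t ∉ A.C (t - 1) then (1 : ℤ) else 0) +
        (if MistakeAt B t then (1 : ℤ) else 0) := by
  have ht1 : t - 1 ≤ T := by omega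
  have hmistnn : (0 : ℤ) ≤ (if MistakeAt B t then (1 : ℤ) else 0) := by
    split_ifs <;> norm_num
  by_cases hmB : σ t ∈ B.C (t - 1) <;> by_cases hmA : σ t ∈ A.C (t - 1)
  · -- hit / hit
    rw [if_neg (not_not_intro hmB), if_neg (not_not_intro hmA)]
    have hphi : Phi B A t ≤ Phi B A (t - 1) := by
      refine phi_le_of_forall B A (phi_nonneg B A _) (fun r hr => ?_)
      rw [gfun_step B A h1 h2 (Or.inl hmB) (Or.inl hmA) r]
      have e1 : evKey B t = σ t := if_pos hmB
      have e2 : evKey A t = σ t := if_pos hmA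
      rw [e1, e2]
      have := gfun_le_phi B A (t := t - 1) (r := r) hr
      linarith
    linarith
  · -- B hit / A evicts
    rw [if_neg (not_not_intro hmB), if_pos hmA]
    have hfA : (A.C (t - 1)).card = k := by
      rcases eq_or_full B A ht1 with heq | ⟨_, hf⟩
      · rw [heq] at hmB; exact absurd hmB hmA
      · exact hf
    have hphi : Phi B A t ≤ Phi B A (t - 1) + 1 := by
      refine phi_le_of_forall B A (by linarith [phi_nonneg B A (t - 1)]) (fun r hr => ?_)
      rw [gfun_step B A h1 h2 (Or.inl hmB) (Or.inr hfA) r]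
      have e1 : evKey B t = σ t := if_pos hmB
      rw [e1, nextp_self h1 h2]
      have := gfun_le_phi B A (t := t - 1) (r := r) hr
      have hnn : (0 : ℤ) ≤ (if nextp σ T (t - 1) (evKey A t) ≤ r then (1:ℤ) else 0) := by
        split_ifs <;> norm_num
      have hle1 : (if t ≤ r then (1:ℤ) else 0) ≤ 1 := by split_ifs <;> norm_num
      linarith
    linarith
  · -- B evicts / A hit
    rw [if_pos hmB, if_neg (not_not_intro hmA)]
    have hfB : (B.C (t - 1)).card = k := by
      rcases eq_or_full B A ht1 with heq | ⟨hf, _⟩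
      · rw [← heq] at hmA; exact absurd hmA hmB
      · exact hf
    have hev : EvictStep B t := ⟨h1, h2, hmB, hfB⟩
    have hq : B.p t ∈ B.C (t - 1) := B.evict_mem t h1 h2 hmB hfB
    have hXgt := cache_nextp_gt h1 h2 hmB
    have hqt : t < nextp σ T (t - 1) (B.p t) := hXgt _ hq
    have ekB : evKey B t = B.p t := if_neg hmB
    have ekA : evKey A t = σ t := if_pos hmA
    by_cases hmist : MistakeAt B t
    · rw [if_pos hmist]
      have hphi : Phi B A t ≤ Phi B A (t - 1) := by
        refine phi_le_of_forall B A (phi_nonneg B A _) (fun r hr => ?_)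
        rw [gfun_step B A h1 h2 (Or.inr hfB) (Or.inl hmA) r, ekB, ekA, nextp_self h1 h2]
        have := gfun_le_phi B A (t := t - 1) (r := r) hr
        have hcomp : (if nextp σ T (t - 1) (B.p t) ≤ r then (1:ℤ) else 0) ≤
            (if t ≤ r then (1:ℤ) else 0) := by
          split_ifs with hx hy
          · norm_num
          · omega
          · norm_num
          · norm_num
        linarith
      linarith
    · rw [if_neg hmist]
      have hall : ∀ x ∈ B.C (t - 1),
          nextp σ T (t - 1) x ≤ nextp σ T (t - 1) (B.p t) := by
        intro x hx
        by_contra hc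
        exact hmist ⟨hev, x, hx, by omega⟩
      have hphi1 : (1 : ℤ) ≤ Phi B A (t - 1) := by
        have hyc : (1 : ℤ) ≤
            (((A.C (t-1)).filter (fun s => nextp σ T (t-1) s ≤ t)).card : ℤ) := by
          have : 0 < ((A.C (t-1)).filter (fun s => nextp σ T (t-1) s ≤ t)).card :=
            Finset.card_pos.mpr ⟨σ t, Finset.mem_filter.mpr ⟨hmA, by rw [nextp_self h1 h2]⟩⟩
          exact_mod_cast this
        have hxc : ((B.C (t-1)).filter (fun s => nextp σ T (t-1) s ≤ t)) = ∅ := by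
          rw [Finset.eq_empty_iff_forall_notMem]
          intro x hx
          rw [Finset.mem_filter] at hx
          have := hXgt x hx.1
          omega
        have hg : (1 : ℤ) ≤ gfun B A (t - 1) t := by
          unfold gfun
          rw [hxc]
          simpa using hyc
        exact le_trans hg (gfun_le_phi B A h2)
      have hphi : Phi B A t ≤ Phi B A (t - 1) - 1 := by
        refine phi_le_of_forall B A (by linarith) (fun r hr => ?_)
        rw [gfun_step B A h1 h2 (Or.inr hfB) (Or.inl hmA) r, ekB, ekA, nextp_self h1 h2]
        by_cases hr1 : nextp σ T (t - 1) (B.p t) ≤ r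
        · rw [if_pos hr1, if_pos (by omega : t ≤ r)]
          have hXfull : ((B.C (t-1)).filter (fun s => nextp σ T (t-1) s ≤ r)) = B.C (t-1) :=
            Finset.filter_true_of_mem (fun x hx => le_trans (hall x hx) hr1)
          have hYle : (((A.C (t-1)).filter (fun s => nextp σ T (t-1) s ≤ r)).card : ℤ) ≤ k := by
            have := Finset.card_le_card (Finset.filter_subset
              (fun s => nextp σ T (t-1) s ≤ r) (A.C (t-1)))
            have h2' := (eq_or_full B A ht1)
            have hfA : (A.C (t-1)).card = k := by
              rcases h2' with heq | ⟨_, hf⟩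
              · rw [← heq] at hmA; exact absurd hmA hmB
              · exact hf
            rw [hfA] at this
            exact_mod_cast this
          have hg0 : gfun B A (t - 1) r ≤ 0 := by
            unfold gfun
            rw [hXfull, hfB]
            linarith
          linarith
        · rw [if_neg hr1]
          by_cases hr2 : t ≤ r
          · rw [if_pos hr2]
            have := gfun_le_phi B A (t := t - 1) (r := r) hr
            linarith
          · rw [if_neg hr2]
            have hg0 : gfun B A (t - 1) r = 0 := by
              unfold gfun
              have hxc : ((B.C (t-1)).filter (fun s => nextp σ T (t-1) s ≤ r)) = ∅ := by
                rw [Finset.eq_empty_iff_forall_notMem]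
                intro x hx
                rw [Finset.mem_filter] at hx
                have := nextp_gt (σ := σ) (T := T) (t - 1) x (by omega)
                omega
              have hyc : ((A.C (t-1)).filter (fun s => nextp σ T (t-1) s ≤ r)) = ∅ := by
                rw [Finset.eq_empty_iff_forall_notMem]
                intro x hx
                rw [Finset.mem_filter] at hx
                have := nextp_gt (σ := σ) (T := T) (t - 1) x (by omega)
                omega
              rw [hxc, hyc]
              simp
            linarith
      linarith
  · -- both miss
    rw [if_pos hmB, if_pos hmA]
    by_cases hfull : (B.C (t - 1)).card = k
    · -- both evict
      have hfA : (A.C (t - 1)).card = k := by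
        rcases eq_or_full B A ht1 with heq | ⟨_, hf⟩
        · rw [← heq]; exact hfull
        · exact hf
      have hfB := hfull
      have hevB : EvictStep B t := ⟨h1, h2, hmB, hfB⟩
      have hq : B.p t ∈ B.C (t - 1) := B.evict_mem t h1 h2 hmB hfB
      have ha : A.p t ∈ A.C (t - 1) := A.evict_mem t h1 h2 hmA hfA
      have hkpos : 0 < k := by
        rw [← hfB]
        exact Finset.card_pos.mpr ⟨_, hq⟩
      have ekB : evKey B t = B.p t := if_neg hmB
      have ekA : evKey A t = A.p t := if_neg hmA
      have hbel : ∀ y ∈ A.C (t - 1),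
          nextp σ T (t - 1) y ≤ nextp σ T (t - 1) (A.p t) := by
        obtain ⟨ia, hia, hsa⟩ := exists_lastIdx A ht1 ha
        have hBel := hA t ⟨h1, h2, hmA, hfA⟩ ia hia hsa.symm
        intro y hy
        obtain ⟨jy, hjy, hsy⟩ := exists_lastIdx A ht1 hy
        have hle := hBel jy hjy
        rw [nu_eq_nextp A hjy, nu_eq_nextp A hia, hsy, hsa] at hle
        exact hle
      by_cases hmist : MistakeAt B t
      · rw [if_pos hmist]
        have hphi : Phi B A t ≤ Phi B A (t - 1) + 1 := by
          refine phi_le_of_forall B A (by linarith [phi_nonneg B A (t - 1)]) (fun r hr => ?_)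
          rw [gfun_step B A h1 h2 (Or.inr hfB) (Or.inr hfA) r, ekB, ekA]
          have := gfun_le_phi B A (t := t - 1) (r := r) hr
          have hnn : (0:ℤ) ≤ (if nextp σ T (t - 1) (A.p t) ≤ r then (1:ℤ) else 0) := by
            split_ifs <;> norm_num
          have hle1 : (if nextp σ T (t - 1) (B.p t) ≤ r then (1:ℤ) else 0) ≤ 1 := by
            split_ifs <;> norm_num
          linarith
        linarith
      · rw [if_neg hmist]
        have hall : ∀ x ∈ B.C (t - 1),
            nextp σ T (t - 1) x ≤ nextp σ T (t - 1) (B.p t) := by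
          intro x hx
          by_contra hc
          exact hmist ⟨hevB, x, hx, by omega⟩
        have hphi : Phi B A t ≤ Phi B A (t - 1) := by
          refine phi_le_of_forall B A (phi_nonneg B A _) (fun r hr => ?_)
          rw [gfun_step B A h1 h2 (Or.inr hfB) (Or.inr hfA) r, ekB, ekA]
          by_cases hra : nextp σ T (t - 1) (A.p t) ≤ r
          · rw [if_pos hra]
            have := gfun_le_phi B A (t := t - 1) (r := r) hr
            have hle1 : (if nextp σ T (t - 1) (B.p t) ≤ r then (1:ℤ) else 0) ≤ 1 := by
              split_ifs <;> norm_num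
            linarith
          · rw [if_neg hra]
            by_cases hrq : nextp σ T (t - 1) (B.p t) ≤ r
            · rw [if_pos hrq]
              have hXfull : ((B.C (t-1)).filter (fun s => nextp σ T (t-1) s ≤ r)) = B.C (t-1) :=
                Finset.filter_true_of_mem (fun x hx => le_trans (hall x hx) hrq)
              have hYle : (((A.C (t-1)).filter (fun s => nextp σ T (t-1) s ≤ r)).card : ℤ)
                  ≤ (k : ℤ) - 1 := by
                have hsub : ((A.C (t-1)).filter (fun s => nextp σ T (t-1) s ≤ r)) ⊆
                    (A.C (t-1)).erase (A.p t) := by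
                  intro y hy
                  rw [Finset.mem_filter] at hy
                  refine Finset.mem_erase.mpr ⟨?_, hy.1⟩
                  intro he
                  rw [he] at hy
                  omega
                have := Finset.card_le_card hsub
                rw [Finset.card_erase_of_mem ha, hfA] at this
                have : (((A.C (t-1)).filter (fun s => nextp σ T (t-1) s ≤ r)).card : ℤ) ≤
                    ((k - 1 : ℕ) : ℤ) := by exact_mod_cast this
                have hk' : ((k - 1 : ℕ) : ℤ) = (k : ℤ) - 1 := by
                  have : 1 ≤ k := hkpos
                  push_cast [Nat.cast_sub this]
                  ring
                rw [hk'] at this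
                exact this
              have hg0 : gfun B A (t - 1) r ≤ -1 := by
                unfold gfun
                rw [hXfull, hfB]
                linarith
              have := phi_nonneg B A (t - 1)
              linarith
            · rw [if_neg hrq]
              have := gfun_le_phi B A (t := t - 1) (r := r) hr
              linarith
        linarith
    · -- both insert (caches equal, not full)
      have heq : B.C (t - 1) = A.C (t - 1) := by
        rcases eq_or_full B A ht1 with heq | ⟨hf, _⟩
        · exact heq
        · exact absurd hf hfull
      have hlt : (B.C (t - 1)).card < k := lt_of_le_of_ne (B.card_le _) hfull
      have e1 := B.hit t h1 h2 (Or.inr hlt)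
      have e2 := A.hit t h1 h2 (Or.inr (by rw [← heq]; exact hlt))
      have hceq : B.C t = A.C t := by rw [e1, e2, heq]
      have hphi : Phi B A t ≤ 0 := by
        refine phi_le_of_forall B A le_rfl (fun r hr => ?_)
        unfold gfun
        rw [hceq]
        simp
      linarith [phi_nonneg B A (t - 1)]

lemma misses_le_of_invariant (hA : IsBelady A) :
    (misses B : ℤ) ≤ (misses A : ℤ) + (cmist B T : ℤ) := by
  have key : ∀ t, t ≤ T →
      (cmiss B t : ℤ) + Phi B A t ≤ (cmiss A t : ℤ) + (cmist B t : ℤ) := by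
    intro t
    induction t with
    | zero =>
      intro _
      have h0 : ∀ R : CacheRun S k T σ, cmiss R 0 = 0 := by
        intro R
        unfold cmiss
        simp
      have h1 : cmist B 0 = 0 := by
        unfold cmist
        simp
      rw [h0 B, h0 A, h1, phi_zero]
      simp
    | succ n ih =>
      intro hn
      have hstep : (1 : ℕ) ≤ n + 1 := by omega
      have eB : (cmiss B (n+1) : ℤ) = (cmiss B n : ℤ) +
          (if σ (n+1) ∉ B.C n then (1:ℤ) else 0) := by
        unfold cmiss
        have := count_step (fun s => σ s ∉ B.C (s - 1)) (t := n + 1) hstep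
        simpa using this
      have eA : (cmiss A (n+1) : ℤ) = (cmiss A n : ℤ) +
          (if σ (n+1) ∉ A.C n then (1:ℤ) else 0) := by
        unfold cmiss
        have := count_step (fun s => σ s ∉ A.C (s - 1)) (t := n + 1) hstep
        simpa using this
      have eM : (cmist B (n+1) : ℤ) = (cmist B n : ℤ) +
          (if MistakeAt B (n+1) then (1:ℤ) else 0) := by
        unfold cmist
        have := count_step (fun s => MistakeAt B s) (t := n + 1) hstep
        simpa using this
      have htr := trans_step B A hA (t := n + 1) hstep hn
      simp only [Nat.add_sub_cancel] at htr
      have := ih (by omega)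
      rw [eB, eA, eM]
      linarith
  have hfin := key T le_rfl
  have hphi := phi_nonneg B A T
  have hmB : misses B = cmiss B T := rfl
  have hmA : misses A = cmiss A T := rfl
  rw [hmB, hmA]
  linarith

/-! ### nextReq facts -/

lemma nextReq_le_succ (i : ℕ) : nextReq σ T i ≤ T + 1 := by
  rw [nextReq_eq_nextp_self]; exact nextp_le_succ _ _

lemma nextReq_spec {i : ℕ} (h : nextReq σ T i ≤ T) :
    i < nextReq σ T i ∧ σ (nextReq σ T i) = σ i ∧
      ∀ r, i < r → r < nextReq σ T i → σ r ≠ σ i := by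
  rw [nextReq_eq_nextp_self] at h ⊢
  exact nextp_spec h

lemma nextReq_inj {i j : ℕ} (hi : nextReq σ T i ≤ T)
    (he : nextReq σ T i = nextReq σ T j) : i = j := by
  have hj : nextReq σ T j ≤ T := he ▸ hi
  obtain ⟨hi1, hi2, hi3⟩ := nextReq_spec hi
  obtain ⟨hj1, hj2, hj3⟩ := nextReq_spec hj
  have hss : σ j = σ i := by
    rw [← he] at hj2
    rw [← hj2, hi2]
  rcases lt_trichotomy i j with h | h | h
  · exact absurd hss (hi3 j h (by omega))
  · exact h
  · exact absurd hss.symm (fun hc => hj3 i h (by omega) hc)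

/-! ### the evicted index and the witness index -/

lemma p_notin_C {R : CacheRun S k T σ} {e : ℕ} (he : EvictStep R e) : R.p e ∉ R.C e := by
  obtain ⟨h1, h2, h3, h4⟩ := he
  have hpm := R.evict_mem e h1 h2 h3 h4
  rw [R.evict e h1 h2 h3 h4]
  intro hc
  rcases Finset.mem_insert.mp hc with hc | hc
  · exact h3 (hc ▸ hpm)
  · exact (Finset.notMem_erase _ _) hc

noncomputable def qIdx (e : ℕ) : ℕ :=
  if h : ∃ i, i ∈ lastIdx B (e - 1) ∧ σ i = B.p e then h.choose else 0

lemma qIdx_spec {e : ℕ} (he : EvictStep B e) :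
    qIdx B e ∈ lastIdx B (e - 1) ∧ σ (qIdx B e) = B.p e := by
  have heT : e ≤ T := he.2.1
  have hpm := B.evict_mem e he.1 he.2.1 he.2.2.1 he.2.2.2
  obtain ⟨i, hi, hsi⟩ := exists_lastIdx B (by omega : e - 1 ≤ T) hpm
  have hex : ∃ i, i ∈ lastIdx B (e - 1) ∧ σ i = B.p e := ⟨i, hi, hsi⟩
  rw [qIdx, dif_pos hex]
  exact hex.choose_spec

noncomputable def wit (e : ℕ) : ℕ :=
  if h : ∃ i, i ∈ lastIdx B (e - 1) ∧
      ∀ j ∈ lastIdx B (e - 1), nextReq σ T j ≤ nextReq σ T i then h.choose else 0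

lemma wit_spec {e : ℕ} (he : EvictStep B e) :
    wit B e ∈ lastIdx B (e - 1) ∧
      ∀ j ∈ lastIdx B (e - 1), nextReq σ T j ≤ nextReq σ T (wit B e) := by
  have hne : (lastIdx B (e - 1)).Nonempty := ⟨qIdx B e, (qIdx_spec B he).1⟩
  obtain ⟨i, hi, hmax⟩ := Finset.exists_max_image (lastIdx B (e - 1)) (nextReq σ T) hne
  have hex : ∃ i, i ∈ lastIdx B (e - 1) ∧
      ∀ j ∈ lastIdx B (e - 1), nextReq σ T j ≤ nextReq σ T i := ⟨i, hi, hmax⟩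
  rw [wit, dif_pos hex]
  exact hex.choose_spec

/-- The evicted index at a full-cache eviction is never again a last-request index at a
later eviction. -/
lemma evict_idx_unique {e e' : ℕ} (hlt : e < e') (he : EvictStep B e) (he' : EvictStep B e')
    (hx : qIdx B e ∈ lastIdx B (e' - 1)) (hpe : σ (qIdx B e) = B.p e') : False := by
  have hq := qIdx_spec B he
  have hnot : σ (qIdx B e) ∈ B.C e → False := by
    intro hc
    rw [hq.2] at hc
    exact p_notin_C he hc
  rw [mem_lastIdx_iff] at hx
  have hq1 := (mem_lastIdx_iff B).mp hq.1
  obtain ⟨hq11, hq12, -, -⟩ := hq1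
  obtain ⟨hx1, hx2, hmem, hlast⟩ := hx
  have he'T : e' ≤ T := he'.2.1
  have he1 : 1 ≤ e := he.1
  have he'1 : 1 ≤ e' := he'.1
  have hee : e ≤ e' - 1 := by omega
  by_cases hcase : σ (qIdx B e) ∈ B.C e
  · exact hnot hcase
  · obtain ⟨s, hs1, hs2, hs3⟩ := exists_req_of_reenter B hee (by omega : e' - 1 ≤ T)
      hcase hmem
    exact hlast s (by omega) (by omega) hs3

/-- At a mistake with a blind choice, facts about indices. -/
lemma bm_facts {ω : ℕ → ℕ} {e : ℕ} (hm : MistakeAt B e) (hbl : BlindChoiceAt B ω e) :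
    nextReq σ T (qIdx B e) < nextReq σ T (wit B e) ∧
      ω (wit B e) ≤ ω (qIdx B e) ∧ nextReq σ T (qIdx B e) ≤ T := by
  obtain ⟨hev, x, hxmem, hxlt⟩ := hm
  have heT : e ≤ T := hev.2.1
  have he1 : 1 ≤ e := hev.1
  have hq := qIdx_spec B hev
  have hw := wit_spec B hev
  have hnuq : nextReq σ T (qIdx B e) = nextp σ T (e - 1) (B.p e) := by
    rw [nu_eq_nextp B hq.1, hq.2]
  obtain ⟨jx, hjx, hsjx⟩ := exists_lastIdx B (by omega : e - 1 ≤ T) hxmem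
  have hnux : nextReq σ T jx = nextp σ T (e - 1) x := by
    rw [nu_eq_nextp B hjx, hsjx]
  have h1 : nextReq σ T (qIdx B e) < nextReq σ T (wit B e) := by
    have := hw.2 jx hjx
    omega
  refine ⟨h1, ?_, ?_⟩
  · exact hbl (qIdx B e) hq.1 hq.2.symm (wit B e) hw.1
  · have := nextReq_le_succ (σ := σ) (T := T) (wit B e)
    omega

/-- **Charging lemma**: blind mistakes are at most the total prediction loss. -/
lemma blind_mistakes_le (ω : ℕ → ℕ) :
    (((Finset.Icc 1 T).filter
        (fun e => MistakeAt B e ∧ BlindChoiceAt B ω e)).card) ≤ totalLoss σ T ω := by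
  classical
  set BM := (Finset.Icc 1 T).filter (fun e => MistakeAt B e ∧ BlindChoiceAt B ω e) with hBM
  set c : ℕ → ℕ := fun e => if nextReq σ T (qIdx B e) < ω (wit B e) then qIdx B e else wit B e
    with hc
  have hmem_lt : ∀ e ∈ BM, c e ∈ Finset.Icc 1 T := by
    intro e he
    rw [hBM, Finset.mem_filter, Finset.mem_Icc] at he
    obtain ⟨⟨he1, he2⟩, hm, hbl⟩ := he
    have hq := (mem_lastIdx_iff B).mp (qIdx_spec B hm.1).1
    have hw := (mem_lastIdx_iff B).mp (wit_spec B hm.1).1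
    rw [hc]
    simp only [Finset.mem_Icc]
    split_ifs <;> omega
  rw [Finset.card_eq_sum_card_fiberwise hmem_lt]
  unfold totalLoss
  refine Finset.sum_le_sum ?_
  intro x hx
  set F := BM.filter (fun e => c e = x) with hF
  rcases F.eq_empty_or_nonempty with hemp | ⟨e0, he0⟩
  · rw [hemp]; simp
  · have hmemF : ∀ e ∈ F, MistakeAt B e ∧ BlindChoiceAt B ω e ∧ c e = x := by
      intro e he
      rw [hF, Finset.mem_filter, hBM, Finset.mem_filter] at he
      exact ⟨he.1.2.1, he.1.2.2, he.2⟩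
    obtain ⟨hm0, hbl0, hcx0⟩ := hmemF e0 he0
    obtain ⟨hq0, hw0, hT0⟩ := bm_facts B hm0 hbl0
    by_cases htype : nextReq σ T (qIdx B e0) < ω (wit B e0)
    · -- type 1: x = qIdx e0, and F = {e0}
      have hxq : x = qIdx B e0 := by rw [← hcx0, hc]; simp [htype]
      have hwlt : nextReq σ T x < ω x := by
        rw [hxq]
        omega
      have hsub : F ⊆ {e0} := by
        intro e he
        obtain ⟨hm, hbl, hcx⟩ := hmemF e he
        obtain ⟨hq, hw, hT⟩ := bm_facts B hm hbl
        rw [Finset.mem_singleton]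
        by_cases ht2 : nextReq σ T (qIdx B e) < ω (wit B e)
        · -- both type 1 : same evicted index
          have hxq' : x = qIdx B e := by rw [← hcx, hc]; simp [ht2]
          by_contra hne
          have hqq : qIdx B e = qIdx B e0 := by rw [← hxq', hxq]
          rcases Nat.lt_or_ge e e0 with hlt | hge
          · exact evict_idx_unique B hlt hm.1 hm0.1
              (hqq ▸ (qIdx_spec B hm0.1).1) (hqq ▸ (qIdx_spec B hm0.1).2)
          · have hlt' : e0 < e := by omega
            exact evict_idx_unique B hlt' hm0.1 hm.1
              (hqq ▸ (qIdx_spec B hm.1).1) (hqq ▸ (qIdx_spec B hm.1).2)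
        · -- e type 2 : contradiction
          exfalso
          have hxw : x = wit B e := by rw [← hcx, hc]; simp [ht2]
          have : ω (wit B e) ≤ nextReq σ T (qIdx B e) := by omega
          rw [← hxw] at this hq
          omega
      have hcard : F.card ≤ 1 := by
        have := Finset.card_le_card hsub
        simpa using this
      have hd : 1 ≤ Nat.dist (nextReq σ T x) (ω x) := by
        simp only [Nat.dist]; omega
      omega
    · -- type 2 : x = wit e0, all of F is type 2, inject into Ico (ω x) (ν x)
      have hxw : x = wit B e0 := by rw [← hcx0, hc]; simp [htype]
      have hwx : ω x ≤ nextReq σ T (qIdx B e0) := by rw [hxw]; omega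
      have hnux : nextReq σ T (qIdx B e0) < nextReq σ T x := by rw [hxw]; exact hq0
      have hwlt : ω x < nextReq σ T x := by omega
      have htype2 : ∀ e ∈ F, ¬ (nextReq σ T (qIdx B e) < ω (wit B e)) := by
        intro e he
        obtain ⟨hm, hbl, hcx⟩ := hmemF e he
        obtain ⟨hq, hw, hT⟩ := bm_facts B hm hbl
        intro hcont
        have hxq : x = qIdx B e := by rw [← hcx, hc]; simp [hcont]
        rw [← hxq] at hcont hw hq
        omega
      have hinj : ∀ e ∈ F, ∀ e' ∈ F,
          nextReq σ T (qIdx B e) = nextReq σ T (qIdx B e') → e = e' := by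
        intro e he e' he' heq
        obtain ⟨hm, hbl, _⟩ := hmemF e he
        obtain ⟨hm', hbl', _⟩ := hmemF e' he'
        have hT := (bm_facts B hm hbl).2.2
        have hqq : qIdx B e = qIdx B e' := nextReq_inj hT heq
        by_contra hne
        rcases Nat.lt_or_ge e e' with hlt | hge
        · exact evict_idx_unique B hlt hm.1 hm'.1
            (hqq ▸ (qIdx_spec B hm'.1).1) (hqq ▸ (qIdx_spec B hm'.1).2)
        · have hlt' : e' < e := by omega
          exact evict_idx_unique B hlt' hm'.1 hm.1
            (hqq.symm ▸ (qIdx_spec B hm.1).1) (hqq.symm ▸ (qIdx_spec B hm.1).2)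
      have hmaps : ∀ e ∈ F, nextReq σ T (qIdx B e) ∈
          Finset.Ico (ω x) (nextReq σ T x) := by
        intro e he
        obtain ⟨hm, hbl, hcx⟩ := hmemF e he
        obtain ⟨hq, hw, hT⟩ := bm_facts B hm hbl
        have hxw' : x = wit B e := by rw [← hcx, hc]; simp [htype2 e he]
        rw [Finset.mem_Ico]
        have h1 := htype2 e he
        rw [← hxw'] at hq h1
        omega
      have hcard : F.card ≤ (Finset.Ico (ω x) (nextReq σ T x)).card :=
        Finset.card_le_card_of_injOn _ hmaps (fun e he e' he' h => hinj e he e' he' h)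
      rw [Nat.card_Ico] at hcard
      have hd : Nat.dist (nextReq σ T x) (ω x) = nextReq σ T x - ω x := by
        simp only [Nat.dist]; omega
      omega

/-! ### chains: last evictions and returns -/

noncomputable def EvSet (t : ℕ) : Finset ℕ :=
  (Finset.Icc 1 (t - 1)).filter (fun e => EvictStep B e ∧ B.p e = σ t)

noncomputable def J (t : ℕ) : ℕ :=
  if h : (EvSet B t).Nonempty then (EvSet B t).max' h else 0

lemma fin3_cases (v : Fin 3) : v = 0 ∨ v = 1 ∨ v = 2 := by
  fin_cases v <;> simp

lemma J_spec {t : ℕ} (h1 : 1 ≤ t) (h2 : t ≤ T) (hmiss : σ t ∉ B.C (t - 1))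
    (hnew : ¬ NewPage σ t) :
    EvictStep B (J B t) ∧ B.p (J B t) = σ t ∧ 1 ≤ J B t ∧ J B t ≤ t - 1 ∧
      (∀ e', J B t < e' → e' ≤ t - 1 → ¬(EvictStep B e' ∧ B.p e' = σ t)) ∧
      nextp σ T (J B t - 1) (B.p (J B t)) = t := by
  unfold NewPage at hnew
  push_neg at hnew
  obtain ⟨s, hs1, hs2, hs3⟩ := hnew
  have hmem : σ t ∈ B.C s := by rw [← hs3]; exact sigma_mem_C B hs1 (by omega)
  have hne : (EvSet B t).Nonempty := by
    obtain ⟨e, he1, he2, he3, he4⟩ := exists_evict_of_leave B (a := s) (b := t - 1)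
      (by omega) (by omega) hmem hmiss
    exact ⟨e, by
      unfold EvSet
      rw [Finset.mem_filter, Finset.mem_Icc]
      exact ⟨⟨by omega, he2⟩, he3, he4⟩⟩
  have hJ : J B t = (EvSet B t).max' hne := by unfold J; rw [dif_pos hne]
  have hJmem : J B t ∈ EvSet B t := hJ ▸ (EvSet B t).max'_mem hne
  unfold EvSet at hJmem
  rw [Finset.mem_filter, Finset.mem_Icc] at hJmem
  obtain ⟨⟨hJ1, hJ2⟩, hJev, hJp⟩ := hJmem
  have hmax : ∀ e', J B t < e' → e' ≤ t - 1 → ¬(EvictStep B e' ∧ B.p e' = σ t) := by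
    rintro e' he'1 he'2 ⟨hev', hp'⟩
    have hmem' : e' ∈ EvSet B t := by
      unfold EvSet
      rw [Finset.mem_filter, Finset.mem_Icc]
      exact ⟨⟨by omega, he'2⟩, hev', hp'⟩
    have := (EvSet B t).le_max' e' hmem'
    rw [← hJ] at this
    omega
  have hnoocc : ∀ r, J B t - 1 < r → r < t → σ r ≠ σ t := by
    intro r hr1 hr2 hre
    have hJpm := B.evict_mem (J B t) hJev.1 hJev.2.1 hJev.2.2.1 hJev.2.2.2
    rcases Nat.lt_or_ge (J B t) r with hgtJ | hleJ
    · -- r > J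
      have hmem' : σ t ∈ B.C r := by rw [← hre]; exact sigma_mem_C B (by omega) (by omega)
      have hnotend : σ t ∉ B.C (t - 1) := hmiss
      rcases Nat.lt_or_ge r (t - 1) with hcase | hcase
      · obtain ⟨e'', he1'', he2'', he3'', he4''⟩ := exists_evict_of_leave B (a := r)
          (b := t - 1) (by omega) (by omega) hmem' hnotend
        exact hmax e'' (by omega) he2'' ⟨he3'', he4''⟩
      · have : r = t - 1 := by omega
        rw [this] at hmem'
        exact hmiss hmem'
    · -- r = J
      have : r = J B t := by omega
      subst this
      exact hJev.2.2.1 (by rw [hre, ← hJp]; exact hJpm)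
  have hnp : nextp σ T (J B t - 1) (σ t) = t := by
    have hle : nextp σ T (J B t - 1) (σ t) ≤ t := nextp_le (by omega) h2 rfl
    have hgt : J B t - 1 < nextp σ T (J B t - 1) (σ t) := nextp_gt _ _ (by omega)
    by_contra hne'
    have hlt : nextp σ T (J B t - 1) (σ t) < t := by omega
    have hsp := nextp_spec (σ := σ) (T := T) (t := J B t - 1) (s := σ t) (by omega)
    exact hnoocc _ hgt hlt hsp.2.1
  exact ⟨hJev, hJp, hJ1, hJ2, hmax, by rw [hJp]; exact hnp⟩

lemma return_spec {e t : ℕ} (hev : EvictStep B e) (hret : t ≤ T)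
    (ht : nextp σ T (e - 1) (B.p e) = t) :
    e < t ∧ σ t ∉ B.C (t - 1) ∧ ¬ NewPage σ t ∧ J B t = e := by
  have he1 : 1 ≤ e := hev.1
  have heT : e ≤ T := hev.2.1
  have hsp := nextp_spec (σ := σ) (T := T) (t := e - 1) (s := B.p e) (by omega)
  rw [ht] at hsp
  obtain ⟨hgt, hst, hmin⟩ := hsp
  have hpmem := B.evict_mem e he1 heT hev.2.2.1 hev.2.2.2
  have hnet : e ≠ t := by
    intro h
    rw [← h] at hst
    exact hev.2.2.1 (hst ▸ hpmem)
  have hlt : e < t := by omega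
  have hnotinCe : B.p e ∉ B.C e := p_notin_C hev
  have hmiss : σ t ∉ B.C (t - 1) := by
    intro hc
    rw [hst] at hc
    obtain ⟨s, hs1, hs2, hs3⟩ := exists_req_of_reenter B (a := e) (b := t - 1)
      (by omega) (by omega) hnotinCe hc
    exact hmin s (by omega) (by omega) hs3
  have hnew : ¬ NewPage σ t := by
    intro hnp
    obtain ⟨i, hi, hsi⟩ := exists_lastIdx B (by omega : e - 1 ≤ T) hpmem
    rw [mem_lastIdx_iff] at hi
    exact hnp i hi.1 (by omega) (by rw [hsi, hst])
  obtain ⟨hJev, hJp, hJ1, hJ2, hJmax, hJnp⟩ := J_spec B (by omega) hret hmiss hnew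
  have hJe : J B t = e := by
    rcases lt_trichotomy (J B t) e with h | h | h
    · exact absurd ⟨hev, hst.symm⟩ (hJmax e h (by omega))
    · exact h
    · exfalso
      have hpm' := B.evict_mem (J B t) hJev.1 hJev.2.1 hJev.2.2.1 hJev.2.2.2
      rw [hJp, hst] at hpm'
      obtain ⟨s, hs1, hs2, hs3⟩ := exists_req_of_reenter B (a := e) (b := J B t - 1)
        (by omega) (by omega) hnotinCe hpm'
      exact hmin s (by omega) (by omega) hs3
  exact ⟨hlt, hmiss, hnew, hJe⟩

lemma strat_rel {ω : ℕ → ℕ} {strat : ℕ → Fin 3} (hB : IsAlternatingOracle B ω strat)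
    {e : ℕ} (hev : EvictStep B e) (hnew : ¬ NewPage σ e) :
    (strat (J B e) = 0 ∧ strat e = 1) ∨
      (strat (J B e) = 1 ∧ strat e = 2) ∨
      (strat (J B e) = 2 ∧ strat e = 0 ∧ BlindChoiceAt B ω e) := by
  obtain ⟨hJev, hJp, hJ1, hJ2, hJmax, hJnp⟩ := J_spec B hev.1 hev.2.1 hev.2.2.1 hnew
  have heT : e ≤ T := hev.2.1
  have he1 : 1 ≤ e := hev.1
  have hle : LastEvictedWith B strat e (strat (J B e)) :=
    ⟨J B e, by omega, hJev, hJp, rfl, fun t1 ht1 ht2 hc => hJmax t1 ht1 (by omega) hc⟩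
  obtain ⟨-, h0, h1, h2⟩ := hB e hev
  rcases fin3_cases (strat (J B e)) with h | h | h
  · rw [h] at hle
    exact Or.inl ⟨h, h0 hle⟩
  · rw [h] at hle
    exact Or.inr (Or.inl ⟨h, (h1 hle).1⟩)
  · rw [h] at hle
    exact Or.inr (Or.inr ⟨h, (h2 hle).1, (h2 hle).2⟩)

lemma strat0_blind {ω : ℕ → ℕ} {strat : ℕ → Fin 3} (hB : IsAlternatingOracle B ω strat)
    {e : ℕ} (hev : EvictStep B e) (h0 : strat e = 0) : BlindChoiceAt B ω e := by
  by_cases hnew : NewPage σ e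
  · exact ((hB e hev).1 hnew).2
  · rcases strat_rel B hB hev hnew with ⟨-, h⟩ | ⟨-, h⟩ | ⟨-, -, h⟩
    · rw [h] at h0; exact absurd h0 (by decide)
    · rw [h] at h0; exact absurd h0 (by decide)
    · exact h

/-! ### counting sets -/

noncomputable def FirstSet : Finset ℕ :=
  (Finset.Icc 1 T).filter (fun t => σ t ∉ B.C (t - 1) ∧ NewPage σ t)

noncomputable def RepSet (strat : ℕ → Fin 3) (s : Fin 3) : Finset ℕ :=
  (Finset.Icc 1 T).filter
    (fun t => σ t ∉ B.C (t - 1) ∧ ¬ NewPage σ t ∧ strat (J B t) = s)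

noncomputable def ESet (strat : ℕ → Fin 3) (s : Fin 3) : Finset ℕ :=
  (Finset.Icc 1 T).filter
    (fun e => EvictStep B e ∧ strat e = s ∧ nextp σ T (e - 1) (B.p e) ≤ T)

lemma miss_split (strat : ℕ → Fin 3) :
    misses B = (FirstSet B).card +
      ((RepSet B strat 0).card + (RepSet B strat 1).card + (RepSet B strat 2).card) := by
  classical
  have h0 : misses B = ((Finset.Icc 1 T).filter (fun t => σ t ∉ B.C (t - 1))).card := rfl
  set M := (Finset.Icc 1 T).filter (fun t => σ t ∉ B.C (t - 1)) with hM
  have hsplit := Finset.card_filter_add_card_filter_not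
    (s := M) (p := fun t => NewPage σ t)
  have hfirst : M.filter (fun t => NewPage σ t) = FirstSet B := by
    ext t
    simp only [hM, FirstSet, Finset.mem_filter, Finset.mem_Icc]
    tauto
  set M2 := M.filter (fun t => ¬ NewPage σ t) with hM2
  have hfib := Finset.card_eq_sum_card_fiberwise
    (s := M2) (t := (Finset.univ : Finset (Fin 3))) (f := fun t => strat (J B t))
    (fun x _ => Finset.mem_univ _)
  have hrep : ∀ s : Fin 3, M2.filter (fun t => strat (J B t) = s) = RepSet B strat s := by
    intro s
    ext t
    simp only [hM2, hM, RepSet, Finset.mem_filter, Finset.mem_Icc]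
    tauto
  have hfib' : M2.card = ∑ b : Fin 3, (M2.filter (fun t => strat (J B t) = b)).card := hfib
  rw [h0, ← hsplit, hfirst, hfib', Fin.sum_univ_three, hrep 0, hrep 1, hrep 2]

lemma rep_card_eq (strat : ℕ → Fin 3) (s : Fin 3) :
    (RepSet B strat s).card = (ESet B strat s).card := by
  classical
  refine le_antisymm ?_ ?_
  · refine Finset.card_le_card_of_injOn (fun t => J B t) ?_ ?_
    · intro t ht
      simp only [RepSet, Finset.mem_coe, Finset.mem_filter, Finset.mem_Icc] at ht
      obtain ⟨⟨ht1, ht2⟩, hmiss, hnew, hstr⟩ := ht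
      obtain ⟨hJev, hJp, hJ1, hJ2, -, hJnp⟩ := J_spec B ht1 ht2 hmiss hnew
      simp only [ESet, Finset.mem_coe, Finset.mem_filter, Finset.mem_Icc]
      exact ⟨⟨hJ1, by omega⟩, hJev, hstr, by rw [hJnp]; omega⟩
    · intro t ht t' ht' he
      simp only [Finset.coe_filter, Set.mem_setOf_eq, RepSet, Finset.mem_coe,
        Finset.mem_filter, Finset.mem_Icc] at ht ht'
      obtain ⟨⟨ht1, ht2⟩, hmiss, hnew, -⟩ := ht
      obtain ⟨⟨ht1', ht2'⟩, hmiss', hnew', -⟩ := ht'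
      have hnp := (J_spec B ht1 ht2 hmiss hnew).2.2.2.2.2
      have hnp' := (J_spec B ht1' ht2' hmiss' hnew').2.2.2.2.2
      have he' : J B t = J B t' := he
      rw [← hnp, ← hnp', he']
  · refine Finset.card_le_card_of_injOn (fun e => nextp σ T (e - 1) (B.p e)) ?_ ?_
    · intro e he
      simp only [ESet, Finset.mem_coe, Finset.mem_filter, Finset.mem_Icc] at he
      obtain ⟨⟨he1, he2⟩, hev, hstr, hret⟩ := he
      obtain ⟨hlt, hmiss, hnew, hJe⟩ := return_spec B hev hret rfl
      simp only [RepSet, Finset.mem_coe, Finset.mem_filter, Finset.mem_Icc]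
      exact ⟨⟨by omega, hret⟩, hmiss, hnew, by rw [hJe]; exact hstr⟩
    · intro e he e' he' heq
      simp only [Finset.coe_filter, Set.mem_setOf_eq, ESet, Finset.mem_coe,
        Finset.mem_filter, Finset.mem_Icc] at he he'
      obtain ⟨⟨he1, he2⟩, hev, -, hret⟩ := he
      obtain ⟨⟨he1', he2'⟩, hev', -, hret'⟩ := he'
      have h1 := (return_spec B hev hret rfl).2.2.2
      have h2 := (return_spec B hev' hret' rfl).2.2.2
      have heq' : nextp σ T (e - 1) (B.p e) = nextp σ T (e' - 1) (B.p e') := heq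
      rw [← h1, ← h2, heq']

lemma eset_chain_le {ω : ℕ → ℕ} {strat : ℕ → Fin 3} (hB : IsAlternatingOracle B ω strat)
    {s s' : Fin 3} (hs0 : s' ≠ 0)
    (hrel : ∀ e, EvictStep B e → ¬ NewPage σ e → strat e = s' → strat (J B e) = s) :
    (ESet B strat s').card ≤ (ESet B strat s).card := by
  classical
  have hnotnew : ∀ e, EvictStep B e → strat e = s' → ¬ NewPage σ e := by
    intro e hev hstr hnew
    have := ((hB e hev).1 hnew).1
    rw [hstr] at this
    exact hs0 this
  refine Finset.card_le_card_of_injOn (fun e => J B e) ?_ ?_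
  · intro e he
    simp only [ESet, Finset.mem_coe, Finset.mem_filter, Finset.mem_Icc] at he
    obtain ⟨⟨he1, he2⟩, hev, hstr, hret⟩ := he
    have hnew := hnotnew e hev hstr
    obtain ⟨hJev, hJp, hJ1, hJ2, -, hJnp⟩ := J_spec B hev.1 hev.2.1 hev.2.2.1 hnew
    simp only [ESet, Finset.mem_coe, Finset.mem_filter, Finset.mem_Icc]
    exact ⟨⟨hJ1, by omega⟩, hJev, hrel e hev hnew hstr, by rw [hJnp]; omega⟩
  · intro e he e' he' heq
    simp only [Finset.coe_filter, Set.mem_setOf_eq, ESet, Finset.mem_coe,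
      Finset.mem_filter, Finset.mem_Icc] at he he'
    obtain ⟨⟨he1, he2⟩, hev, hstr, -⟩ := he
    obtain ⟨⟨he1', he2'⟩, hev', hstr', -⟩ := he'
    have hnew := hnotnew e hev hstr
    have hnew' := hnotnew e' hev' hstr'
    have hnp := (J_spec B hev.1 hev.2.1 hev.2.2.1 hnew).2.2.2.2.2
    have hnp' := (J_spec B hev'.1 hev'.2.1 hev'.2.2.1 hnew').2.2.2.2.2
    have heq' : J B e = J B e' := heq
    rw [← hnp, ← hnp', heq']

lemma mist_split (ω : ℕ → ℕ) {strat : ℕ → Fin 3} (hB : IsAlternatingOracle B ω strat) :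
    cmist B T ≤
      ((Finset.Icc 1 T).filter (fun e => MistakeAt B e ∧ BlindChoiceAt B ω e)).card +
        (ESet B strat 1).card + (ESet B strat 2).card := by
  classical
  have h0 : cmist B T = ((Finset.Icc 1 T).filter (fun e => MistakeAt B e)).card := rfl
  set M := (Finset.Icc 1 T).filter (fun e => MistakeAt B e) with hM
  have hfib : M.card = ∑ b : Fin 3, (M.filter (fun e => strat e = b)).card :=
    Finset.card_eq_sum_card_fiberwise (fun x _ => Finset.mem_univ _)
  have hbad : ∀ e ∈ M, nextp σ T (e - 1) (B.p e) ≤ T := by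
    intro e he
    rw [hM, Finset.mem_filter] at he
    obtain ⟨-, hev, x, hx, hlt⟩ := he
    have := nextp_le_succ (σ := σ) (T := T) (e - 1) x
    omega
  have h1 : (M.filter (fun e => strat e = 1)).card ≤ (ESet B strat 1).card := by
    refine Finset.card_le_card ?_
    intro e he
    rw [Finset.mem_filter] at he
    obtain ⟨heM, hstr⟩ := he
    have hbad' := hbad e heM
    rw [hM, Finset.mem_filter] at heM
    simp only [ESet, Finset.mem_filter]
    exact ⟨heM.1, heM.2.1, hstr, hbad'⟩
  have h2 : (M.filter (fun e => strat e = 2)).card ≤ (ESet B strat 2).card := by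
    refine Finset.card_le_card ?_
    intro e he
    rw [Finset.mem_filter] at he
    obtain ⟨heM, hstr⟩ := he
    have hbad' := hbad e heM
    rw [hM, Finset.mem_filter] at heM
    simp only [ESet, Finset.mem_filter]
    exact ⟨heM.1, heM.2.1, hstr, hbad'⟩
  have h3 : (M.filter (fun e => strat e = 0)).card ≤
      ((Finset.Icc 1 T).filter (fun e => MistakeAt B e ∧ BlindChoiceAt B ω e)).card := by
    refine Finset.card_le_card ?_
    intro e he
    rw [Finset.mem_filter] at he
    obtain ⟨heM, hstr⟩ := he
    rw [hM, Finset.mem_filter] at heM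
    rw [Finset.mem_filter]
    exact ⟨heM.1, heM.2, strat0_blind B hB heM.2.1 hstr⟩
  rw [h0, hfib, Fin.sum_univ_three]
  omega

lemma first_le (A : CacheRun S k T σ) : (FirstSet B).card ≤ misses A := by
  have hsub : FirstSet B ⊆ (Finset.Icc 1 T).filter (fun t => σ t ∉ A.C (t - 1)) := by
    intro t ht
    simp only [FirstSet, Finset.mem_filter, Finset.mem_Icc] at ht ⊢
    obtain ⟨⟨h1, h2⟩, -, hnew⟩ := ht
    refine ⟨⟨h1, h2⟩, ?_⟩
    intro hc
    obtain ⟨i, hi, hsi⟩ := exists_lastIdx A (by omega : t - 1 ≤ T) hc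
    rw [mem_lastIdx_iff] at hi
    exact hnew i hi.1 (by omega) hsi
  exact Finset.card_le_card hsub

end Dev
/-- For every realization of the internal random choices of
AlternatingOracle, `OBJ_B ≤ 3·OPT + 3η`. -/
theorem stmt17 {S : Type} [DecidableEq S] (k T : ℕ) (hk : 1 ≤ k) (σ : ℕ → S) (ω : ℕ → ℕ)
    (B A : CacheRun S k T σ) (strat : ℕ → Fin 3)
    (hB : IsAlternatingOracle B ω strat) (hA : IsBelady A) :
    misses B ≤ 3 * misses A + 3 * totalLoss σ T ω := by
  have hsplit := miss_split B strat
  rw [rep_card_eq B strat 0, rep_card_eq B strat 1, rep_card_eq B strat 2] at hsplit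
  have hrel10 : ∀ e, EvictStep B e → ¬ NewPage σ e → strat e = 1 → strat (J B e) = 0 := by
    intro e hev hnew hstr
    rcases strat_rel B hB hev hnew with ⟨h, -⟩ | ⟨-, h⟩ | ⟨-, h, -⟩
    · exact h
    · exact absurd (hstr.symm.trans h) (by decide)
    · exact absurd (hstr.symm.trans h) (by decide)
  have hrel21 : ∀ e, EvictStep B e → ¬ NewPage σ e → strat e = 2 → strat (J B e) = 1 := by
    intro e hev hnew hstr
    rcases strat_rel B hB hev hnew with ⟨-, h⟩ | ⟨h, -⟩ | ⟨-, h, -⟩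
    · exact absurd (hstr.symm.trans h) (by decide)
    · exact h
    · exact absurd (hstr.symm.trans h) (by decide)
  have h10 := eset_chain_le B hB (by decide : (1 : Fin 3) ≠ 0) hrel10
  have h21 := eset_chain_le B hB (by decide : (2 : Fin 3) ≠ 0) hrel21
  have hEint := misses_le_of_invariant B A hA
  have hE : misses B ≤ misses A + cmist B T := by exact_mod_cast hEint
  have hmist := mist_split B ω hB
  have hbm := blind_mistakes_le B ω
  have hf := first_le B A
  omega

end Caching
end

section
/- For any feasible eviction strategy Q (and any run of Q), the number of time steps t at which Q evicts an optimal page — that is, a page σ(j) with j ∈ I_Q(t−1) such that ν(j) ≥ ν(i) for all i ∈ I_Q(t−1) — is at most OPT. -/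
namespace Caching

attribute [local instance low] Classical.propDecidable

variable {S : Type} [DecidableEq S]

section Aux

variable {S : Type} [DecidableEq S]

/-- first time `s ≥ t` (with `s ≤ T`) at which page `q` is requested; `T+1` if none. -/
noncomputable def pageNext (σ : ℕ → S) (T : ℕ) (q : S) (t : ℕ) : ℕ :=
  if h : ∃ s, t ≤ s ∧ s ≤ T ∧ σ s = q then Nat.find h else T + 1

variable {σ : ℕ → S} {T : ℕ}

lemma le_pageNext {q : S} {t : ℕ} (h : t ≤ T + 1) : t ≤ pageNext σ T q t := by
  unfold pageNext
  split
  · next hh => exact (Nat.find_spec hh).1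
  · exact h

lemma pageNext_spec {q : S} {t : ℕ} (h : pageNext σ T q t ≤ T) :
    σ (pageNext σ T q t) = q := by
  unfold pageNext at h ⊢
  split at h
  · next hh =>
    split
    · exact (Nat.find_spec hh).2.2
    · next hc => exact absurd hh hc
  · omega

lemma pageNext_min {q : S} {t s : ℕ} (h1 : t ≤ s) (h2 : s ≤ T) (h3 : σ s = q) :
    pageNext σ T q t ≤ s := by
  unfold pageNext
  split
  · exact Nat.find_min' _ ⟨h1, h2, h3⟩
  · next hc => exact absurd ⟨s, h1, h2, h3⟩ hc

lemma pageNext_eq_self {t : ℕ} (ht : t ≤ T) : pageNext σ T (σ t) t = t :=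
  le_antisymm (pageNext_min le_rfl ht rfl) (le_pageNext (by omega))

lemma pageNext_succ {q : S} {t : ℕ} (h : σ t ≠ q) :
    pageNext σ T q t = pageNext σ T q (t + 1) := by
  have hiff : ∀ s, (t ≤ s ∧ s ≤ T ∧ σ s = q) ↔ (t + 1 ≤ s ∧ s ≤ T ∧ σ s = q) := by
    intro s
    constructor
    · rintro ⟨h1, h2, h3⟩
      refine ⟨?_, h2, h3⟩
      rcases Nat.eq_or_lt_of_le h1 with rfl | hlt
      · exact absurd h3 h
      · exact hlt
    · rintro ⟨h1, h2, h3⟩; exact ⟨by omega, h2, h3⟩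
  unfold pageNext
  by_cases hex : ∃ s, t ≤ s ∧ s ≤ T ∧ σ s = q
  · have hex' : ∃ s, t + 1 ≤ s ∧ s ≤ T ∧ σ s = q := by
      obtain ⟨s, hs⟩ := hex; exact ⟨s, (hiff s).1 hs⟩
    rw [dif_pos hex, dif_pos hex']
    apply le_antisymm
    · exact Nat.find_min' _ ((hiff _).2 (Nat.find_spec hex'))
    · exact Nat.find_min' _ ((hiff _).1 (Nat.find_spec hex))
  · have hex' : ¬ ∃ s, t + 1 ≤ s ∧ s ≤ T ∧ σ s = q := by
      intro ⟨s, hs⟩; exact hex ⟨s, (hiff s).2 hs⟩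
    rw [dif_neg hex, dif_neg hex']

lemma lt_pageNext_of_ne {q : S} {t : ℕ} (h : σ t ≠ q) (ht : t ≤ T) :
    t < pageNext σ T q t := by
  rw [pageNext_succ h]
  exact lt_of_lt_of_le (Nat.lt_succ_self t) (le_pageNext (by omega))

lemma pageNext_inj {q1 q2 : S} {t : ℕ} (h1 : pageNext σ T q1 t ≤ T)
    (he : pageNext σ T q1 t = pageNext σ T q2 t) : q1 = q2 := by
  have s1 := pageNext_spec h1
  have s2 := pageNext_spec (q := q2) (he ▸ h1)
  rw [← s1, ← s2, he]

variable {k : ℕ}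

/-- The current request is always cached after the step. -/
lemma mem_C_self (X : CacheRun S k T σ) {t : ℕ} (ht1 : 1 ≤ t) (htT : t ≤ T) :
    σ t ∈ X.C t := by
  by_cases h : σ t ∈ X.C (t - 1) ∨ (X.C (t - 1)).card < k
  · rw [X.hit t ht1 htT h]; exact Finset.mem_insert_self _ _
  · push_neg at h
    have hcard : (X.C (t - 1)).card = k :=
      le_antisymm (X.card_le _) h.2
    rw [X.evict t ht1 htT h.1 hcard]; exact Finset.mem_insert_self _ _

lemma C_subset_insert (X : CacheRun S k T σ) {t : ℕ} (ht1 : 1 ≤ t) (htT : t ≤ T) :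
    X.C t ⊆ insert (σ t) (X.C (t - 1)) := by
  by_cases h : σ t ∈ X.C (t - 1) ∨ (X.C (t - 1)).card < k
  · rw [X.hit t ht1 htT h]
  · push_neg at h
    have hcard : (X.C (t - 1)).card = k :=
      le_antisymm (X.card_le _) h.2
    rw [X.evict t ht1 htT h.1 hcard]
    exact Finset.insert_subset_insert _ (Finset.erase_subset _ _)

/-- Every cached page has been requested. -/
lemma mem_C_requested (X : CacheRun S k T σ) :
    ∀ τ, τ ≤ T → ∀ q ∈ X.C τ, ∃ i, 1 ≤ i ∧ i ≤ τ ∧ σ i = q := by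
  intro τ
  induction τ with
  | zero => intro _ q hq; rw [X.init] at hq; exact absurd hq (Finset.notMem_empty q)
  | succ n ih =>
    intro hT q hq
    have hsub := C_subset_insert X (t := n + 1) (by omega) hT
    rcases Finset.mem_insert.mp (hsub hq) with h | h
    · exact ⟨n + 1, by omega, le_rfl, h.symm⟩
    · obtain ⟨i, h1, h2, h3⟩ := ih (by omega) q (by simpa using h)
      exact ⟨i, h1, by omega, h3⟩

/-- Every cached page has a last-request index. -/
lemma exists_mem_lastIdx (X : CacheRun S k T σ) {τ : ℕ} (hτ : τ ≤ T) {q : S}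
    (hq : q ∈ X.C τ) : ∃ i ∈ lastIdx X τ, σ i = q := by
  set Q : Finset ℕ := (Finset.Icc 1 τ).filter (fun i => σ i = q) with hQ
  have hne : Q.Nonempty := by
    obtain ⟨i, h1, h2, h3⟩ := mem_C_requested X τ hτ q hq
    exact ⟨i, by simp [hQ, Finset.mem_filter, Finset.mem_Icc, h1, h2, h3]⟩
  set i := Q.max' hne with hi
  have hiQ : i ∈ Q := Q.max'_mem hne
  have hIcc : i ∈ Finset.Icc 1 τ := (Finset.mem_filter.mp hiQ).1
  have hσi : σ i = q := (Finset.mem_filter.mp hiQ).2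
  refine ⟨i, ?_, hσi⟩
  simp only [lastIdx, Finset.mem_filter]
  refine ⟨hIcc, by rw [hσi]; exact hq, ?_⟩
  intro j hj hje
  have hjQ : j ∈ Q := by
    rw [hQ, Finset.mem_filter, Finset.mem_Icc]
    have hj' := Finset.mem_Icc.mp hj
    have hi' := Finset.mem_Icc.mp hIcc
    exact ⟨⟨by omega, hj'.2⟩, by rw [hje, hσi]⟩
  have := Q.le_max' j hjQ
  have hj' := Finset.mem_Icc.mp hj
  omega

/-- `nextReq` of a last-request index equals `pageNext` from `τ + 1`. -/
lemma nextReq_eq_pageNext (X : CacheRun S k T σ) {τ i : ℕ} (hi : i ∈ lastIdx X τ) :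
    nextReq σ T i = pageNext σ T (σ i) (τ + 1) := by
  simp only [lastIdx, Finset.mem_filter] at hi
  obtain ⟨hIcc, _, hlast⟩ := hi
  have hiτ := Finset.mem_Icc.mp hIcc
  have hiff : ∀ s, (i < s ∧ s ≤ T ∧ σ s = σ i) ↔ (τ + 1 ≤ s ∧ s ≤ T ∧ σ s = σ i) := by
    intro s
    constructor
    · rintro ⟨h1, h2, h3⟩
      refine ⟨?_, h2, h3⟩
      by_contra hs
      push_neg at hs
      exact hlast s (Finset.mem_Icc.mpr ⟨by omega, by omega⟩) h3
    · rintro ⟨h1, h2, h3⟩; exact ⟨by omega, h2, h3⟩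
  rw [nextReq, pageNext]
  by_cases hex : ∃ s, i < s ∧ s ≤ T ∧ σ s = σ i
  · have hex' : ∃ s, τ + 1 ≤ s ∧ s ≤ T ∧ σ s = σ i := by
      obtain ⟨s, hs⟩ := hex; exact ⟨s, (hiff s).1 hs⟩
    rw [dif_pos hex, dif_pos hex']
    apply le_antisymm
    · exact Nat.find_min' _ ((hiff _).2 (Nat.find_spec hex'))
    · exact Nat.find_min' _ ((hiff _).1 (Nat.find_spec hex))
  · have hex' : ¬ ∃ s, τ + 1 ≤ s ∧ s ≤ T ∧ σ s = σ i := by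
      intro ⟨s, hs⟩; exact hex ⟨s, (hiff s).2 hs⟩
    rw [dif_neg hex, dif_neg hex']

lemma card_sdiff_le_sdiff' {s t : Finset S} (h : s.card ≤ t.card) :
    (s \ t).card ≤ (t \ s).card := by
  have h1 := Finset.card_sdiff_add_card_inter s t
  have h2 := Finset.card_sdiff_add_card_inter t s
  rw [Finset.inter_comm] at h2
  omega

end Aux
section Potential

variable {S : Type} [DecidableEq S] {k T : ℕ} {σ : ℕ → S}

/-- The deficiency summand: count of "live" pages held by `A` but not `R` with next
request `≤ x`, minus count of live pages held by `R` but not `A` with next request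
`< x`. -/
noncomputable def fv (R A : CacheRun S k T σ) (t x : ℕ) : ℤ :=
  (((A.C t \ R.C t).filter fun p =>
      pageNext σ T p (t + 1) ≤ x ∧ pageNext σ T p (t + 1) ≤ T).card : ℤ) -
  (((R.C t \ A.C t).filter fun p =>
      pageNext σ T p (t + 1) < x ∧ pageNext σ T p (t + 1) ≤ T).card : ℤ)

/-- The deficiency potential. -/
noncomputable def pot (R A : CacheRun S k T σ) (t : ℕ) : ℕ :=
  (Finset.range (T + 2)).sup fun x => (fv R A t x).toNat

/-- The event: at time `t` the run `R` evicts an optimal page. -/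
def EvOpt (R : CacheRun S k T σ) (t : ℕ) : Prop :=
  ∃ j, EvictsIdx R t j ∧ ∀ i ∈ lastIdx R (t - 1), nextReq σ T i ≤ nextReq σ T j

lemma evOpt_facts {R : CacheRun S k T σ} {t : ℕ} (hP : EvOpt R t) :
    1 ≤ t ∧ t ≤ T ∧ σ t ∉ R.C (t - 1) ∧ (R.C (t - 1)).card = k ∧
      R.p t ∈ R.C (t - 1) ∧
      ∀ q ∈ R.C (t - 1),
        pageNext σ T q ((t - 1) + 1) ≤ pageNext σ T (R.p t) ((t - 1) + 1) := by
  obtain ⟨j, ⟨⟨ht1, htT, hmiss, hcard⟩, hj, hpj⟩, hopt⟩ := hP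
  have hjC : σ j ∈ R.C (t - 1) := by
    simp only [lastIdx, Finset.mem_filter, Finset.mem_Icc] at hj
    exact hj.2.1
  refine ⟨ht1, htT, hmiss, hcard, by rw [hpj]; exact hjC, ?_⟩
  intro q hq
  obtain ⟨i, hi, hσi⟩ := exists_mem_lastIdx R (τ := t - 1) (by omega) hq
  have h1 := nextReq_eq_pageNext R hi
  have h2 := nextReq_eq_pageNext R hj
  have h3 := hopt i hi
  rw [h1, h2] at h3
  rw [← hσi, hpj]
  exact h3

lemma fv_le_pot {R A : CacheRun S k T σ} {t x : ℕ} (hx : x ∈ Finset.range (T + 2)) :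
    fv R A t x ≤ (pot R A t : ℤ) := by
  have h1 : (fv R A t x).toNat ≤ pot R A t := by
    unfold pot
    exact Finset.le_sup (f := fun y => (fv R A t y).toNat) hx
  have h2 : fv R A t x ≤ ((fv R A t x).toNat : ℤ) := Int.self_le_toNat _
  exact le_trans h2 (by exact_mod_cast h1)

lemma pot_zero (R A : CacheRun S k T σ) : pot R A 0 = 0 := by
  apply Nat.le_antisymm _ (Nat.zero_le _)
  apply Finset.sup_le
  intro x _
  have : fv R A 0 x ≤ 0 := by
    rw [fv]
    have : (A.C 0 \ R.C 0) = ∅ := by rw [A.init]; simp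
    rw [this]
    simp
  omega

end Potential
section Step

variable {S : Type} [DecidableEq S] {k T : ℕ} {σ : ℕ → S}

lemma step_ineq (R A : CacheRun S k T σ) {τ : ℕ} (hT : τ + 1 ≤ T) :
    (if EvOpt R (τ + 1) then 1 else 0) + pot R A (τ + 1) ≤
      (if σ (τ + 1) ∈ A.C τ then 0 else 1) + pot R A τ := by
  classical
  set r := σ (τ + 1) with hrdef
  set eI : ℕ := if EvOpt R (τ + 1) then 1 else 0 with heI
  set fI : ℕ := if r ∈ A.C τ then 0 else 1 with hfIdef
  have ht1 : 1 ≤ τ + 1 := by omega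
  have hsub : (τ + 1) - 1 = τ := by omega
  have hrCa' : r ∈ A.C (τ + 1) := mem_C_self A ht1 hT
  have hrCr' : r ∈ R.C (τ + 1) := mem_C_self R ht1 hT
  have hCa'sub : A.C (τ + 1) ⊆ insert r (A.C τ) := by
    have := C_subset_insert A ht1 hT; rwa [hsub] at this
  have hCr'sub : R.C (τ + 1) ⊆ insert r (R.C τ) := by
    have := C_subset_insert R ht1 hT; rwa [hsub] at this
  have hν0r : pageNext σ T r (τ + 1) = τ + 1 := pageNext_eq_self hT
  have hν0ge : ∀ q : S, τ + 1 ≤ pageNext σ T q (τ + 1) := fun q => le_pageNext (by omega)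
  have hν1ge : ∀ q : S, τ + 1 + 1 ≤ pageNext σ T q (τ + 1 + 1) :=
    fun q => le_pageNext (by omega)
  have hνeq : ∀ q : S, q ≠ r → pageNext σ T q (τ + 1) = pageNext σ T q (τ + 1 + 1) :=
    fun q hq => pageNext_succ (fun h => hq h.symm)
  -- the potential at time τ bounds fv at any x in range
  -- (β) when there is an event but A hits, the old potential is at least 1
  have hpot1 : EvOpt R (τ + 1) → r ∈ A.C τ → 1 ≤ pot R A τ := by
    intro hE hfI0
    obtain ⟨_, _, hmiss, _, _, _⟩ := evOpt_facts hE
    rw [hsub] at hmiss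
    have hone : (1 : ℤ) ≤ fv R A τ (τ + 1) := by
      rw [fv]
      have hW : ((R.C τ \ A.C τ).filter fun p =>
          pageNext σ T p (τ + 1) < τ + 1 ∧ pageNext σ T p (τ + 1) ≤ T) = ∅ := by
        apply Finset.filter_eq_empty_iff.mpr
        intro p _ hcon
        exact absurd hcon.1 (by have := hν0ge p; omega)
      have hL : 1 ≤ ((A.C τ \ R.C τ).filter fun p =>
          pageNext σ T p (τ + 1) ≤ τ + 1 ∧ pageNext σ T p (τ + 1) ≤ T).card := by
        refine Finset.card_pos.mpr ⟨r, ?_⟩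
        rw [Finset.mem_filter, Finset.mem_sdiff]
        exact ⟨⟨hfI0, hmiss⟩, by rw [hν0r]; omega⟩
      rw [hW]
      simp only [Finset.card_empty, Nat.cast_zero, sub_zero]
      exact_mod_cast hL
    have hx : τ + 1 ∈ Finset.range (T + 2) := by
      rw [Finset.mem_range]; omega
    have h1 : (fv R A τ (τ + 1)).toNat ≤ pot R A τ := by
      rw [pot]; exact Finset.le_sup (f := fun y => (fv R A τ y).toNat) hx
    omega
  have hbeta : eI ≤ fI + pot R A τ := by
    rw [heI, hfIdef]
    by_cases hE : EvOpt R (τ + 1)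
    · by_cases hfI0 : r ∈ A.C τ
      · simpa [hE, hfI0] using hpot1 hE hfI0
      · simp [hE, hfI0]
    · simp [hE]
  have halpha : ∀ x ∈ Finset.range (T + 2),
      fv R A (τ + 1) x + (eI : ℤ) ≤ (fI : ℤ) + (pot R A τ : ℤ) := by
    intro x hx
    have hfvle : fv R A τ x ≤ (pot R A τ : ℤ) := fv_le_pot hx
    have hpotnn : (0 : ℤ) ≤ (pot R A τ : ℤ) := Int.natCast_nonneg _
    -- unfold fv at both times
    rw [fv]
    -- names for the four sets
    set L1 := ((A.C (τ + 1) \ R.C (τ + 1)).filter fun p =>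
      pageNext σ T p (τ + 1 + 1) ≤ x ∧ pageNext σ T p (τ + 1 + 1) ≤ T) with hL1def
    set W1 := ((R.C (τ + 1) \ A.C (τ + 1)).filter fun p =>
      pageNext σ T p (τ + 1 + 1) < x ∧ pageNext σ T p (τ + 1 + 1) ≤ T) with hW1def
    set L0 := ((A.C τ \ R.C τ).filter fun p =>
      pageNext σ T p (τ + 1) ≤ x ∧ pageNext σ T p (τ + 1) ≤ T) with hL0def
    set W0 := ((R.C τ \ A.C τ).filter fun p =>
      pageNext σ T p (τ + 1) < x ∧ pageNext σ T p (τ + 1) ≤ T) with hW0def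
    have hfv0 : fv R A τ x = (L0.card : ℤ) - (W0.card : ℤ) := by rw [fv]
    rw [hfv0] at hfvle
    -- generic membership extraction for L1
    have hL1mem : ∀ p ∈ L1, p ≠ r ∧ p ∈ A.C τ ∧ p ∉ R.C (τ + 1) ∧
        pageNext σ T p (τ + 1) ≤ x ∧ pageNext σ T p (τ + 1) ≤ T := by
      intro p hp
      rw [hL1def, Finset.mem_filter, Finset.mem_sdiff] at hp
      obtain ⟨⟨hpa, hpr⟩, hν⟩ := hp
      have hpne : p ≠ r := fun h => hpr (h ▸ hrCr')
      have hpCa : p ∈ A.C τ := by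
        rcases Finset.mem_insert.mp (hCa'sub hpa) with h | h
        · exact absurd h hpne
        · exact h
      rw [hνeq p hpne]
      exact ⟨hpne, hpCa, hpr, hν.1, hν.2⟩
    -- main case split on the event
    by_cases hE : EvOpt R (τ + 1)
    · -- event case
      obtain ⟨_, _, hmiss, hcard, hpRC, hopt⟩ := evOpt_facts hE
      rw [hsub] at hmiss hcard hpRC hopt
      set pR := R.p (τ + 1) with hpRdef
      have hCr' : R.C (τ + 1) = insert r ((R.C τ).erase pR) := by
        have := R.evict (τ + 1) ht1 hT (by rwa [hsub]) (by rwa [hsub])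
        rwa [hsub] at this
      have hpRr : pR ≠ r := fun h => hmiss (by rw [← hrdef, ← h]; exact hpRC)
      have hkpos : 1 ≤ k := by
        have : 0 < (R.C τ).card := Finset.card_pos.mpr ⟨pR, hpRC⟩
        omega
      have hcard' : (R.C (τ + 1)).card = k := by
        rw [hCr', Finset.card_insert_of_notMem, Finset.card_erase_of_mem hpRC]
        · omega
        · intro hmem
          exact hmiss (Finset.erase_subset _ _ hmem)
      have heI1 : eI = 1 := by rw [heI, if_pos hE]
      -- target in the event case
      have htarget : (L1.card : ℤ) - (W1.card : ℤ) ≤ (fI : ℤ) + (pot R A τ : ℤ) - 1 := by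
        have hIfoot : (0 : ℤ) ≤ (fI : ℤ) + (pot R A τ : ℤ) - 1 := by
          by_cases hfI0 : r ∈ A.C τ
          · have := hpot1 hE hfI0
            rw [hfIdef, if_pos hfI0]
            push_cast
            omega
          · rw [hfIdef, if_neg hfI0]
            push_cast
            omega
        rcases le_or_gt x (τ + 1) with hx1 | hx1
        · -- x small: L1 is empty
          have hL1e : L1 = ∅ := by
            rw [hL1def]
            apply Finset.filter_eq_empty_iff.mpr
            intro p _ hcon
            have := hν1ge p
            omega
          rw [hL1e]
          simp only [Finset.card_empty, Nat.cast_zero, zero_sub]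
          have : (0 : ℤ) ≤ (W1.card : ℤ) := Int.natCast_nonneg _
          omega
        · -- x > τ + 1
          by_cases hc : pageNext σ T pR (τ + 1) ≤ T ∧
              ((pR ∈ A.C (τ + 1) ∧ pageNext σ T pR (τ + 1) ≤ x) ∨
               (pR ∉ A.C τ ∧ pageNext σ T pR (τ + 1) < x))
          · -- B1 : the evicted page is live and "counts"; then fv(τ+1) x ≤ 0
            obtain ⟨hpRT, hcor⟩ := hc
            have hWfull : W1 = R.C (τ + 1) \ A.C (τ + 1) := by
              rw [hW1def]
              apply Finset.filter_true_of_mem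
              intro w hw
              rw [Finset.mem_sdiff] at hw
              have hwr : w ≠ r := fun h => hw.2 (h ▸ hrCa')
              have hwmem : w ∈ (R.C τ).erase pR := by
                rcases Finset.mem_insert.mp (hCr' ▸ hw.1) with h | h
                · exact absurd h hwr
                · exact h
              have hwpR : w ≠ pR := (Finset.mem_erase.mp hwmem).1
              have hwC : w ∈ R.C τ := (Finset.mem_erase.mp hwmem).2
              have hle : pageNext σ T w (τ + 1) ≤ pageNext σ T pR (τ + 1) := hopt w hwC
              have hne : pageNext σ T w (τ + 1) ≠ pageNext σ T pR (τ + 1) := by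
                intro h
                exact hwpR (pageNext_inj (le_trans h.le hpRT) h)
              have hlt : pageNext σ T w (τ + 1) < pageNext σ T pR (τ + 1) :=
                lt_of_le_of_ne hle hne
              have hltx : pageNext σ T w (τ + 1) < x := by
                rcases hcor with ⟨_, h⟩ | ⟨_, h⟩ <;> omega
              rw [← hνeq w hwr]
              exact ⟨hltx, by omega⟩
            have h1 : L1.card ≤ (A.C (τ + 1) \ R.C (τ + 1)).card := by
              rw [hL1def]; exact Finset.card_le_card (Finset.filter_subset _ _)
            have h2 : (A.C (τ + 1) \ R.C (τ + 1)).card ≤ (R.C (τ + 1) \ A.C (τ + 1)).card := by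
              apply card_sdiff_le_sdiff'
              rw [hcard']
              exact A.card_le _
            have h3 : L1.card ≤ (R.C (τ + 1) \ A.C (τ + 1)).card := le_trans h1 h2
            rw [hWfull]
            omega
          · -- B2/B4 : the evicted page does not count
            -- L1 ⊆ L0 (minus r when A hits)
            have hL1L0 : ∀ p ∈ L1, p ∈ L0 ∧ p ≠ r := by
              intro p hp
              obtain ⟨hpne, hpCa, hpr', hν1, hν2⟩ := hL1mem p hp
              have hpCr : p ∉ R.C τ := by
                intro hpCr
                have hppR : p = pR := by
                  by_contra hne
                  exact hpr' (hCr' ▸ Finset.mem_insert_of_mem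
                    (Finset.mem_erase.mpr ⟨hne, hpCr⟩))
                -- then pR would "count": contradiction with hc
                rw [hppR] at hν1 hν2 hpCa
                have hpRA' : pR ∈ A.C (τ + 1) := by
                  -- p ∈ A.C (τ+1) from membership in L1
                  rw [hL1def, Finset.mem_filter, Finset.mem_sdiff] at hp
                  exact hppR ▸ hp.1.1
                exact hc ⟨hν2, Or.inl ⟨hpRA', hν1⟩⟩
              refine ⟨?_, hpne⟩
              rw [hL0def, Finset.mem_filter, Finset.mem_sdiff]
              exact ⟨⟨hpCa, hpCr⟩, hν1, hν2⟩
            -- W0 ⊆ W1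
            have hW0W1 : W0 ⊆ W1 := by
              intro w hw
              rw [hW0def, Finset.mem_filter, Finset.mem_sdiff] at hw
              obtain ⟨⟨hwR, hwA⟩, hν1, hν2⟩ := hw
              have hwr : w ≠ r := fun h => hmiss (by rw [← hrdef, ← h]; exact hwR)
              have hwpR : w ≠ pR := by
                intro h
                rw [h] at hwA hν1 hν2
                exact hc ⟨hν2, Or.inr ⟨hwA, hν1⟩⟩
              rw [hW1def, Finset.mem_filter, Finset.mem_sdiff]
              refine ⟨⟨?_, ?_⟩, ?_⟩
              · rw [hCr']
                exact Finset.mem_insert_of_mem (Finset.mem_erase.mpr ⟨hwpR, hwR⟩)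
              · intro hcon
                rcases Finset.mem_insert.mp (hCa'sub hcon) with h | h
                · exact hwr h
                · exact hwA h
              · rw [← hνeq w hwr]
                exact ⟨hν1, hν2⟩
            have hWc : (W0.card : ℤ) ≤ (W1.card : ℤ) := by
              exact_mod_cast Finset.card_le_card hW0W1
            by_cases hfI0 : r ∈ A.C τ
            · -- fI = 0 : r is removed from L0, giving the -1
              have hrL0 : r ∈ L0 := by
                rw [hL0def, Finset.mem_filter, Finset.mem_sdiff]
                exact ⟨⟨hfI0, hmiss⟩, by rw [hν0r]; omega⟩
              have hL1sub : L1 ⊆ L0.erase r := by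
                intro p hp
                obtain ⟨h1, h2⟩ := hL1L0 p hp
                exact Finset.mem_erase.mpr ⟨h2, h1⟩
              have hLc : L1.card ≤ L0.card - 1 := by
                have h1 := Finset.card_le_card hL1sub
                rw [Finset.card_erase_of_mem hrL0] at h1
                exact h1
              have hL0pos : 1 ≤ L0.card := Finset.card_pos.mpr ⟨r, hrL0⟩
              rw [hfIdef, if_pos hfI0]
              push_cast
              omega
            · -- fI = 1
              have hL1sub : L1 ⊆ L0 := fun p hp => (hL1L0 p hp).1
              have hLc : (L1.card : ℤ) ≤ (L0.card : ℤ) := by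
                exact_mod_cast Finset.card_le_card hL1sub
              rw [hfIdef, if_neg hfI0]
              push_cast
              omega
      rw [heI1]
      push_cast
      omega
    · -- no event
      have heI0 : eI = 0 := by rw [heI, if_neg hE]
      have htarget : (L1.card : ℤ) - (W1.card : ℤ) ≤ (fI : ℤ) + (pot R A τ : ℤ) := by
        by_cases hRfull : σ (τ + 1) ∉ R.C τ ∧ (R.C τ).card = k
        · -- R evicts (full-cache miss), but not an optimal page
          obtain ⟨hmiss, hcard⟩ := hRfull
          set pR := R.p (τ + 1) with hpRdef
          have hCr' : R.C (τ + 1) = insert r ((R.C τ).erase pR) := by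
            have := R.evict (τ + 1) ht1 hT (by rwa [hsub]) (by rwa [hsub])
            rwa [hsub] at this
          have hpRC : pR ∈ R.C τ := by
            have := R.evict_mem (τ + 1) ht1 hT (by rwa [hsub]) (by rwa [hsub])
            rwa [hsub] at this
          have hpRr : pR ≠ r := fun h => hmiss (by rw [← hrdef, ← h]; exact hpRC)
          -- membership transfer lemmas
          have hL1core : ∀ p ∈ L1, p ≠ pR → p ∈ L0 ∧ p ≠ r := by
            intro p hp hppR
            obtain ⟨hpne, hpCa, hpr', hν1, hν2⟩ := hL1mem p hp
            have hpCr : p ∉ R.C τ := by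
              intro hpCr
              exact hpr' (hCr' ▸ Finset.mem_insert_of_mem
                (Finset.mem_erase.mpr ⟨hppR, hpCr⟩))
            refine ⟨?_, hpne⟩
            rw [hL0def, Finset.mem_filter, Finset.mem_sdiff]
            exact ⟨⟨hpCa, hpCr⟩, hν1, hν2⟩
          have hW0core : ∀ w ∈ W0, w ≠ pR → w ∈ W1 := by
            intro w hw hwpR
            rw [hW0def, Finset.mem_filter, Finset.mem_sdiff] at hw
            obtain ⟨⟨hwR, hwA⟩, hν1, hν2⟩ := hw
            have hwr : w ≠ r := fun h => hmiss (by rw [← hrdef, ← h]; exact hwR)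
            rw [hW1def, Finset.mem_filter, Finset.mem_sdiff]
            refine ⟨⟨?_, ?_⟩, ?_⟩
            · rw [hCr']
              exact Finset.mem_insert_of_mem (Finset.mem_erase.mpr ⟨hwpR, hwR⟩)
            · intro hcon
              rcases Finset.mem_insert.mp (hCa'sub hcon) with h | h
              · exact hwr h
              · exact hwA h
            · rw [← hνeq w hwr]
              exact ⟨hν1, hν2⟩
          by_cases hpRCa : pR ∈ A.C τ
          · -- the evicted page may enter L1, but then w-side untouched
            have hW0W1 : W0 ⊆ W1 := by
              intro w hw
              have hwpR : w ≠ pR := by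
                intro h
                rw [hW0def, Finset.mem_filter, Finset.mem_sdiff] at hw
                exact hw.1.2 (h ▸ hpRCa)
              exact hW0core w hw hwpR
            have hWc : (W0.card : ℤ) ≤ (W1.card : ℤ) := by
              exact_mod_cast Finset.card_le_card hW0W1
            by_cases hfI0 : r ∈ A.C τ
            · -- fI = 0, use the removal of r to compensate pR
              rcases le_or_gt x (τ + 1) with hx1 | hx1
              · have hL1e : L1 = ∅ := by
                  rw [hL1def]
                  apply Finset.filter_eq_empty_iff.mpr
                  intro p _ hcon
                  have := hν1ge p
                  omega
                rw [hL1e, hfIdef, if_pos hfI0]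
                simp only [Finset.card_empty, Nat.cast_zero, zero_sub]
                have : (0 : ℤ) ≤ (W1.card : ℤ) := Int.natCast_nonneg _
                omega
              · have hrL0 : r ∈ L0 := by
                  rw [hL0def, Finset.mem_filter, Finset.mem_sdiff]
                  exact ⟨⟨hfI0, hmiss⟩, by rw [hν0r]; omega⟩
                have hL1sub : L1 ⊆ insert pR (L0.erase r) := by
                  intro p hp
                  by_cases hppR : p = pR
                  · rw [hppR]; exact Finset.mem_insert_self _ _
                  · obtain ⟨h1, h2⟩ := hL1core p hp hppR
                    exact Finset.mem_insert_of_mem (Finset.mem_erase.mpr ⟨h2, h1⟩)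
                have hLc : L1.card ≤ L0.card := by
                  have h1 := Finset.card_le_card hL1sub
                  have h2 := Finset.card_insert_le pR (L0.erase r)
                  rw [Finset.card_erase_of_mem hrL0] at h2
                  have hL0pos : 1 ≤ L0.card := Finset.card_pos.mpr ⟨r, hrL0⟩
                  omega
                rw [hfIdef, if_pos hfI0]
                push_cast
                have : (L1.card : ℤ) ≤ (L0.card : ℤ) := by exact_mod_cast hLc
                omega
            · -- fI = 1
              have hL1sub : L1 ⊆ insert pR L0 := by
                intro p hp
                by_cases hppR : p = pR
                · rw [hppR]; exact Finset.mem_insert_self _ _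
                · exact Finset.mem_insert_of_mem (hL1core p hp hppR).1
              have hLc : L1.card ≤ L0.card + 1 := by
                have h1 := Finset.card_le_card hL1sub
                have h2 := Finset.card_insert_le pR L0
                omega
              rw [hfIdef, if_neg hfI0]
              push_cast
              have : (L1.card : ℤ) ≤ (L0.card : ℤ) + 1 := by exact_mod_cast hLc
              omega
          · -- pR ∉ A.C τ : pR cannot enter L1; W loses at most pR
            have hL1sub' : ∀ p ∈ L1, p ∈ L0 ∧ p ≠ r := by
              intro p hp
              have hppR : p ≠ pR := by
                intro h
                obtain ⟨hpne, hpCa, _, _, _⟩ := hL1mem p hp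
                exact hpRCa (h ▸ hpCa)
              exact hL1core p hp hppR
            have hW0sub : W0 ⊆ insert pR W1 := by
              intro w hw
              by_cases hwpR : w = pR
              · rw [hwpR]; exact Finset.mem_insert_self _ _
              · exact Finset.mem_insert_of_mem (hW0core w hw hwpR)
            have hWc : W0.card ≤ W1.card + 1 := by
              have h1 := Finset.card_le_card hW0sub
              have h2 := Finset.card_insert_le pR W1
              omega
            by_cases hfI0 : r ∈ A.C τ
            · rcases le_or_gt x (τ + 1) with hx1 | hx1
              · have hL1e : L1 = ∅ := by
                  rw [hL1def]
                  apply Finset.filter_eq_empty_iff.mpr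
                  intro p _ hcon
                  have := hν1ge p
                  omega
                rw [hL1e, hfIdef, if_pos hfI0]
                simp only [Finset.card_empty, Nat.cast_zero, zero_sub]
                have : (0 : ℤ) ≤ (W1.card : ℤ) := Int.natCast_nonneg _
                omega
              · have hrL0 : r ∈ L0 := by
                  rw [hL0def, Finset.mem_filter, Finset.mem_sdiff]
                  exact ⟨⟨hfI0, hmiss⟩, by rw [hν0r]; omega⟩
                have hL1sub : L1 ⊆ L0.erase r := by
                  intro p hp
                  obtain ⟨h1, h2⟩ := hL1sub' p hp
                  exact Finset.mem_erase.mpr ⟨h2, h1⟩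
                have hLc : L1.card ≤ L0.card - 1 := by
                  have h1 := Finset.card_le_card hL1sub
                  rw [Finset.card_erase_of_mem hrL0] at h1
                  exact h1
                have hL0pos : 1 ≤ L0.card := Finset.card_pos.mpr ⟨r, hrL0⟩
                rw [hfIdef, if_pos hfI0]
                push_cast
                omega
            · have hL1sub : L1 ⊆ L0 := fun p hp => (hL1sub' p hp).1
              have hLc : (L1.card : ℤ) ≤ (L0.card : ℤ) := by
                exact_mod_cast Finset.card_le_card hL1sub
              rw [hfIdef, if_neg hfI0]
              push_cast
              omega
        · -- R hit or not-full miss: no eviction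
          have hor : σ (τ + 1) ∈ R.C τ ∨ (R.C τ).card < k := by
            by_cases h1 : σ (τ + 1) ∈ R.C τ
            · exact Or.inl h1
            · right
              have h2 := R.card_le τ
              rcases Nat.lt_or_ge ((R.C τ).card) k with h | h
              · exact h
              · exact absurd ⟨h1, le_antisymm h2 h⟩ hRfull
          have hCr' : R.C (τ + 1) = insert r (R.C τ) := by
            have := R.hit (τ + 1) ht1 hT (by rwa [hsub])
            rwa [hsub] at this
          have hL1sub' : ∀ p ∈ L1, p ∈ L0 ∧ p ≠ r := by
            intro p hp
            obtain ⟨hpne, hpCa, hpr', hν1, hν2⟩ := hL1mem p hp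
            have hpCr : p ∉ R.C τ := by
              intro hpCr
              exact hpr' (hCr' ▸ Finset.mem_insert_of_mem hpCr)
            refine ⟨?_, hpne⟩
            rw [hL0def, Finset.mem_filter, Finset.mem_sdiff]
            exact ⟨⟨hpCa, hpCr⟩, hν1, hν2⟩
          have hL1sub : L1 ⊆ L0 := fun p hp => (hL1sub' p hp).1
          have hLc : (L1.card : ℤ) ≤ (L0.card : ℤ) := by
            exact_mod_cast Finset.card_le_card hL1sub
          have hW0core : ∀ w ∈ W0, w ≠ r → w ∈ W1 := by
            intro w hw hwr
            rw [hW0def, Finset.mem_filter, Finset.mem_sdiff] at hw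
            obtain ⟨⟨hwR, hwA⟩, hν1, hν2⟩ := hw
            rw [hW1def, Finset.mem_filter, Finset.mem_sdiff]
            refine ⟨⟨?_, ?_⟩, ?_⟩
            · rw [hCr']
              exact Finset.mem_insert_of_mem hwR
            · intro hcon
              rcases Finset.mem_insert.mp (hCa'sub hcon) with h | h
              · exact hwr h
              · exact hwA h
            · rw [← hνeq w hwr]
              exact ⟨hν1, hν2⟩
          by_cases hfI0 : r ∈ A.C τ
          · have hW0W1 : W0 ⊆ W1 := by
              intro w hw
              have hwr : w ≠ r := by
                intro h
                rw [hW0def, Finset.mem_filter, Finset.mem_sdiff] at hw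
                exact hw.1.2 (h ▸ hfI0)
              exact hW0core w hw hwr
            have hWc : (W0.card : ℤ) ≤ (W1.card : ℤ) := by
              exact_mod_cast Finset.card_le_card hW0W1
            rw [hfIdef, if_pos hfI0]
            push_cast
            omega
          · have hW0sub : W0 ⊆ insert r W1 := by
              intro w hw
              by_cases hwr : w = r
              · rw [hwr]; exact Finset.mem_insert_self _ _
              · exact Finset.mem_insert_of_mem (hW0core w hw hwr)
            have hWc : W0.card ≤ W1.card + 1 := by
              have h1 := Finset.card_le_card hW0sub
              have h2 := Finset.card_insert_le r W1
              omega
            rw [hfIdef, if_neg hfI0]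
            push_cast
            omega
      rw [heI0]
      push_cast
      omega
  -- conclude
  have hsup : pot R A (τ + 1) ≤ fI + pot R A τ - eI := by
    rw [pot]
    apply Finset.sup_le
    intro x hx
    rw [Int.toNat_le]
    have h1 := halpha x hx
    omega
  omega

end Step
section Main

variable {S : Type} [DecidableEq S] {k T : ℕ} {σ : ℕ → S}

lemma main_induction (R A : CacheRun S k T σ) :
    ∀ n, n ≤ T →
      ((Finset.Icc 1 n).filter fun t => EvOpt R t).card + pot R A n ≤
      ((Finset.Icc 1 n).filter fun t => σ t ∉ A.C (t - 1)).card := by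
  intro n
  induction n with
  | zero =>
    intro _
    simp [pot_zero]
  | succ m ih =>
    intro hT
    have hIcc : Finset.Icc 1 (m + 1) = insert (m + 1) (Finset.Icc 1 m) :=
      (Finset.insert_Icc_right_eq_Icc_add_one (by omega)).symm
    have hnm : (m + 1) ∉ Finset.Icc 1 m := by
      rw [Finset.mem_Icc]; omega
    have hE : ((Finset.Icc 1 (m + 1)).filter fun t => EvOpt R t).card =
        ((Finset.Icc 1 m).filter fun t => EvOpt R t).card +
          (if EvOpt R (m + 1) then 1 else 0) := by
      rw [hIcc, Finset.filter_insert]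
      split
      · rw [Finset.card_insert_of_notMem (fun h => hnm (Finset.filter_subset _ _ h))]
      · simp
    have hF : ((Finset.Icc 1 (m + 1)).filter fun t => σ t ∉ A.C (t - 1)).card =
        ((Finset.Icc 1 m).filter fun t => σ t ∉ A.C (t - 1)).card +
          (if σ (m + 1) ∈ A.C m then 0 else 1) := by
      rw [hIcc, Finset.filter_insert]
      have hmm : (m + 1) - 1 = m := by omega
      by_cases hmem : σ (m + 1) ∈ A.C m
      · rw [if_neg (by rw [hmm]; exact fun h => h hmem), if_pos hmem]
        omega
      · rw [if_pos (by rw [hmm]; exact hmem), if_neg hmem,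
          Finset.card_insert_of_notMem (fun h => hnm (Finset.filter_subset _ _ h))]
    have hstep := step_ineq R A (τ := m) hT
    have hih := ih (by omega)
    omega

end Main

/-- For any run of a feasible eviction strategy, the number of time
steps at which it evicts an optimal page (one maximizing `ν` over the cache) is at most
`OPT`. -/
theorem stmt18 {S : Type} [DecidableEq S] (k T : ℕ) (hk : 1 ≤ k) (σ : ℕ → S)
    (R A : CacheRun S k T σ) (hA : IsBelady A) :
    {t : ℕ | ∃ j, EvictsIdx R t j ∧
        ∀ i ∈ lastIdx R (t - 1), nextReq σ T i ≤ nextReq σ T j}.ncard ≤ misses A := by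
  classical
  have hmain := main_induction R A T le_rfl
  have hset : {t : ℕ | ∃ j, EvictsIdx R t j ∧
      ∀ i ∈ lastIdx R (t - 1), nextReq σ T i ≤ nextReq σ T j} =
      ↑((Finset.Icc 1 T).filter fun t => EvOpt R t) := by
    ext t
    simp only [Set.mem_setOf_eq, Finset.coe_filter, Finset.mem_Icc, Set.mem_setOf_eq]
    constructor
    · intro h
      have hP : EvOpt R t := h
      obtain ⟨j, ⟨⟨h1, h2, _, _⟩, _, _⟩, _⟩ := h
      exact ⟨⟨h1, h2⟩, hP⟩
    · exact fun h => h.2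
  rw [hset, Set.ncard_coe_finset, misses]
  omega

end Caching
end
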